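/- arXiv:2503.09008 — 4 statements merged into one kernel-verified Lean document; each statement's English description precedes it below -/
import Mathlib

section
/- Let G be a finite simple connected graph on N ≥ 2 vertices with adjacency matrix A and diagonal degree matrix D (so every vertex has degree at least 1). Then for every real γ > 0, the second largest eigenvalue of the normalized adjacency operator D^{-1/2} A D^{-1/2} is strictly smaller than the second largest eigenvalue of the augmented normalized adjacency operator (γI + D)^{-1/2}(γI + A)(γI + D)^{-1/2}; that is, λ_{N−1}(D^{-1/2} A D^{-1/2}) < λ_{N−1}((γI + D)^{-1/2}(γI + A)(γI + D)^{-1/2}), where eigenvalues of a symmetric matrix are listed in nondecreasing order λ₁ ≤ ⋯ ≤ λ_N. -/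
open Matrix

section Helpers

variable {N : ℕ}

private lemma inner_dot' (a b : EuclideanSpace ℝ (Fin N)) :
    (inner ℝ a b : ℝ) = (a : Fin N → ℝ) ⬝ᵥ b := by
  simp [PiLp.inner_apply, dotProduct, RCLike.inner_apply, mul_comm]

private lemma parseval_sq (M : Matrix (Fin N) (Fin N) ℝ) (hM : M.IsHermitian) (w : Fin N → ℝ) :
    w ⬝ᵥ w = ∑ i, ((hM.eigenvectorBasis i : Fin N → ℝ) ⬝ᵥ w)^2 := by
  have h := (hM.eigenvectorBasis).sum_inner_mul_inner
    (WithLp.toLp 2 w : EuclideanSpace ℝ (Fin N)) (WithLp.toLp 2 w : EuclideanSpace ℝ (Fin N))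
  simp only [inner_dot', WithLp.ofLp_toLp] at h
  rw [← h]
  refine Finset.sum_congr rfl fun i _ => ?_
  simp only [inner_dot']
  rw [dotProduct_comm, sq]

private lemma parseval_quad (M : Matrix (Fin N) (Fin N) ℝ) (hM : M.IsHermitian) (w : Fin N → ℝ) :
    w ⬝ᵥ (M *ᵥ w) = ∑ i, hM.eigenvalues i * ((hM.eigenvectorBasis i : Fin N → ℝ) ⬝ᵥ w)^2 := by
  have h := (hM.eigenvectorBasis).sum_inner_mul_inner
    (WithLp.toLp 2 w : EuclideanSpace ℝ (Fin N)) (WithLp.toLp 2 (M *ᵥ w : Fin N → ℝ) : EuclideanSpace ℝ (Fin N))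
  simp only [inner_dot', WithLp.ofLp_toLp] at h
  rw [← h]
  refine Finset.sum_congr rfl fun i _ => ?_
  simp only [inner_dot']
  have hsym : ((hM.eigenvectorBasis i : Fin N → ℝ)) ⬝ᵥ (M *ᵥ w)
      = (M *ᵥ (hM.eigenvectorBasis i : Fin N → ℝ)) ⬝ᵥ w := by
    rw [dotProduct_mulVec, ← mulVec_transpose]
    congr 1
    rw [← conjTranspose_eq_transpose_of_trivial, hM]
  have he : M *ᵥ (hM.eigenvectorBasis i : Fin N → ℝ)
      = hM.eigenvalues i • (hM.eigenvectorBasis i : Fin N → ℝ) :=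
    hM.mulVec_eigenvectorBasis i
  rw [hsym, he, smul_dotProduct, dotProduct_comm]
  rw [smul_eq_mul]; ring

private lemma eigvec_dot (M : Matrix (Fin N) (Fin N) ℝ) (hM : M.IsHermitian) (i j : Fin N) :
    ((hM.eigenvectorBasis i : Fin N → ℝ)) ⬝ᵥ (hM.eigenvectorBasis j : Fin N → ℝ)
      = if i = j then 1 else 0 := by
  rw [← inner_dot']
  exact orthonormal_iff_ite.mp hM.eigenvectorBasis.orthonormal i j

end Helpers

/-- **Self-loops increase the second largest eigenvalue of the normalized adjacency operator.**
For a finite simple connected graph `G` on `N ≥ 2` vertices with adjacency matrix `A` and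
degree matrix `D`, and any `γ > 0`, the second largest eigenvalue (1-based index `N-1`,
i.e. 0-based index `N-2` in a nondecreasing listing) of `D^{-1/2} A D^{-1/2}` is strictly
smaller than that of `(γI + D)^{-1/2} (γI + A) (γI + D)^{-1/2}`. -/
theorem selfloops_increase_second_largest_eigenvalue
    {N : ℕ} (hN : 2 ≤ N)
    (G : SimpleGraph (Fin N)) [DecidableRel G.Adj]
    (hconn : G.Connected) (γ : ℝ) (hγ : 0 < γ)
    (S Sγ : Matrix (Fin N) (Fin N) ℝ)
    (hSdef : S = Matrix.diagonal (fun v => (Real.sqrt (G.degree v))⁻¹) *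
      G.adjMatrix ℝ * Matrix.diagonal (fun v => (Real.sqrt (G.degree v))⁻¹))
    (hSγdef : Sγ = Matrix.diagonal (fun v => (Real.sqrt (γ + G.degree v))⁻¹) *
      (γ • (1 : Matrix (Fin N) (Fin N) ℝ) + G.adjMatrix ℝ) *
      Matrix.diagonal (fun v => (Real.sqrt (γ + G.degree v))⁻¹))
    (hS : S.IsHermitian) (hSγ : Sγ.IsHermitian)
    (μ μγ : Fin N → ℝ) (hμmono : Monotone μ) (hμγmono : Monotone μγ)
    (σ σγ : Equiv.Perm (Fin N))
    (hμ : μ = hS.eigenvalues ∘ σ) (hμγ : μγ = hSγ.eigenvalues ∘ σγ) :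
    μ ⟨N - 2, by omega⟩ < μγ ⟨N - 2, by omega⟩ := by
  -- positivity of degrees
  have hdeg : ∀ v : Fin N, 0 < G.degree v := by
    intro v
    rw [G.degree_pos_iff_exists_adj]
    obtain ⟨u, hu⟩ := Fintype.exists_ne_of_one_lt_card (by simpa using hN.trans_lt' one_lt_two) v
    have hadj : ∀ {a b : Fin N}, G.Walk a b → a ≠ b → ∃ c, G.Adj a c := by
      intro a b p
      induction p with
      | nil => exact fun h => absurd rfl h
      | cons h _ _ => exact fun _ => ⟨_, h⟩
    obtain ⟨wk⟩ := hconn.preconnected v u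
    exact hadj wk (Ne.symm hu)
  have hdegR : ∀ v : Fin N, (0:ℝ) < (G.degree v : ℝ) := fun v => by exact_mod_cast hdeg v
  have hsd : ∀ v : Fin N, 0 < Real.sqrt (G.degree v) := fun v => Real.sqrt_pos.mpr (hdegR v)
  have hsg : ∀ v : Fin N, 0 < Real.sqrt (γ + G.degree v) := fun v =>
    Real.sqrt_pos.mpr (by have := (hdegR v); linarith)
  have hsd2 : ∀ v : Fin N, Real.sqrt (G.degree v) ^ 2 = (G.degree v : ℝ) := fun v =>
    Real.sq_sqrt (hdegR v).le
  have hsg2 : ∀ v : Fin N, Real.sqrt (γ + G.degree v) ^ 2 = γ + (G.degree v : ℝ) := fun v =>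
    Real.sq_sqrt (by have := hdegR v; linarith)
  set i₂ : Fin N := ⟨N - 2, by omega⟩ with hi₂def
  set i₁ : Fin N := ⟨N - 1, by omega⟩ with hi₁def
  show μ i₂ < μγ i₂
  have hile : i₂ ≤ i₁ := by simp [hi₂def, hi₁def, Fin.le_def]; omega
  have hine : i₂ ≠ i₁ := by simp [hi₂def, hi₁def, Fin.ext_iff]; omega
  -- eigenvectors of S for the top two eigenvalues
  set y₁ : Fin N → ℝ := (hS.eigenvectorBasis (σ i₂) : Fin N → ℝ) with hy₁def
  set y₂ : Fin N → ℝ := (hS.eigenvectorBasis (σ i₁) : Fin N → ℝ) with hy₂def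
  have h11 : y₁ ⬝ᵥ y₁ = 1 := by rw [hy₁def, eigvec_dot]; simp
  have h22 : y₂ ⬝ᵥ y₂ = 1 := by rw [hy₂def, eigvec_dot]; simp
  have h12 : y₁ ⬝ᵥ y₂ = 0 := by
    rw [hy₁def, hy₂def, eigvec_dot]
    simp [σ.injective.ne hine]
  have eig1 : S *ᵥ y₁ = μ i₂ • y₁ := by
    rw [hμ, hy₁def]; exact hS.mulVec_eigenvectorBasis (σ i₂)
  have eig2 : S *ᵥ y₂ = μ i₁ • y₂ := by
    rw [hμ, hy₂def]; exact hS.mulVec_eigenvectorBasis (σ i₁)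
  -- quadratic form translation: from S to the adjacency matrix
  have hSquad : ∀ u : Fin N → ℝ, u ⬝ᵥ (S *ᵥ u) =
      (fun v => (Real.sqrt (G.degree v))⁻¹ * u v) ⬝ᵥ
        (G.adjMatrix ℝ *ᵥ (fun v => (Real.sqrt (G.degree v))⁻¹ * u v)) := by
    intro u
    rw [hSdef, ← mulVec_mulVec, ← mulVec_mulVec]
    have h1 : Matrix.diagonal (fun v => (Real.sqrt (G.degree v))⁻¹) *ᵥ u
        = fun v => (Real.sqrt (G.degree v))⁻¹ * u v := by
      funext v; rw [mulVec_diagonal]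
    rw [h1]
    generalize (G.adjMatrix ℝ *ᵥ fun v => (Real.sqrt (G.degree v))⁻¹ * u v) = t
    simp only [dotProduct, mulVec_diagonal]
    exact Finset.sum_congr rfl fun v _ => by ring
  have hNorm : ∀ u : Fin N → ℝ, u ⬝ᵥ u =
      ∑ v, (G.degree v : ℝ) * ((Real.sqrt (G.degree v))⁻¹ * u v)^2 := by
    intro u
    rw [dotProduct]
    refine Finset.sum_congr rfl fun v _ => ?_
    rw [mul_pow, inv_pow, hsd2 v, mul_inv_cancel_left₀ (hdegR v).ne', sq]
  -- Laplacian facts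
  have hLap : ∀ x : Fin N → ℝ, x ⬝ᵥ (G.adjMatrix ℝ *ᵥ x) ≤ ∑ v, (G.degree v : ℝ) * x v^2 := by
    intro x
    have h := (SimpleGraph.posSemidef_lapMatrix ℝ G).dotProduct_mulVec_nonneg x
    rw [star_trivial] at h
    rw [SimpleGraph.lapMatrix, sub_mulVec, dotProduct_sub,
      SimpleGraph.dotProduct_mulVec_degMatrix] at h
    have he : ∑ v, (G.degree v : ℝ) * x v * x v = ∑ v, (G.degree v : ℝ) * x v^2 :=
      Finset.sum_congr rfl fun v _ => by ring
    linarith [h, he]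
  have hLapEq : ∀ x : Fin N → ℝ,
      x ⬝ᵥ (G.adjMatrix ℝ *ᵥ x) = ∑ v, (G.degree v : ℝ) * x v^2 → ∀ v u : Fin N, x v = x u := by
    intro x hx v u
    have h0 : Matrix.toLinearMap₂' ℝ (G.lapMatrix ℝ) x x = 0 := by
      rw [Matrix.toLinearMap₂'_apply', SimpleGraph.lapMatrix, sub_mulVec, dotProduct_sub,
        SimpleGraph.dotProduct_mulVec_degMatrix]
      have he : ∑ v, (G.degree v : ℝ) * x v * x v = ∑ v, (G.degree v : ℝ) * x v^2 :=
        Finset.sum_congr rfl fun v _ => by ring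
      rw [he, hx]; ring
    exact (G.lapMatrix_toLinearMap₂'_apply'_eq_zero_iff_forall_reachable x).mp h0 v u
      (hconn.preconnected v u)
  -- Rayleigh bound: each unit eigenvector has eigenvalue ≤ 1, with equality only for
  -- vectors proportional to sqrt-degree
  have hRay : ∀ (t : ℝ) (u : Fin N → ℝ), S *ᵥ u = t • u → u ⬝ᵥ u = 1 →
      t ≤ 1 ∧ (t = 1 → ∀ v v' : Fin N,
        (Real.sqrt (G.degree v))⁻¹ * u v = (Real.sqrt (G.degree v'))⁻¹ * u v') := by
    intro t u heig hnorm
    have hq : u ⬝ᵥ (S *ᵥ u) = t := by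
      rw [heig, dotProduct_smul, smul_eq_mul, hnorm, mul_one]
    have hq2 : (fun v => (Real.sqrt (G.degree v))⁻¹ * u v) ⬝ᵥ
        (G.adjMatrix ℝ *ᵥ (fun v => (Real.sqrt (G.degree v))⁻¹ * u v)) = t := by
      rw [← hSquad, hq]
    have hd : ∑ v, (G.degree v : ℝ) * ((Real.sqrt (G.degree v))⁻¹ * u v)^2 = 1 := by
      rw [← hNorm, hnorm]
    constructor
    · have := hLap (fun v => (Real.sqrt (G.degree v))⁻¹ * u v)
      rw [hq2, hd] at this
      exact this
    · intro ht
      refine hLapEq (fun v => (Real.sqrt (G.degree v))⁻¹ * u v) ?_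
      rw [hq2, hd, ht]
  -- second largest eigenvalue of S is < 1 (by connectedness)
  have hμle : μ i₂ ≤ μ i₁ := hμmono hile
  have h1le : μ i₁ ≤ 1 := (hRay (μ i₁) y₂ eig2 h22).1
  have hlt1 : μ i₂ < 1 := by
    rcases lt_or_ge (μ i₂) 1 with h | h
    · exact h
    exfalso
    have he2 : μ i₂ = 1 := le_antisymm (hμle.trans h1le) h
    have he1 : μ i₁ = 1 := le_antisymm h1le (he2 ▸ hμle)
    have hc1 := (hRay (μ i₂) y₁ eig1 h11).2 he2
    have hc2 := (hRay (μ i₁) y₂ eig2 h22).2 he1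
    set v₀ : Fin N := ⟨0, by omega⟩
    set k₁ : ℝ := (Real.sqrt (G.degree v₀))⁻¹ * y₁ v₀ with hk₁
    set k₂ : ℝ := (Real.sqrt (G.degree v₀))⁻¹ * y₂ v₀ with hk₂
    have hy1v : ∀ v, y₁ v = Real.sqrt (G.degree v) * k₁ := by
      intro v
      have := hc1 v v₀
      rw [← hk₁] at this
      rw [← this]
      exact (mul_inv_cancel_left₀ (hsd v).ne' _).symm
    have hy2v : ∀ v, y₂ v = Real.sqrt (G.degree v) * k₂ := by
      intro v
      have := hc2 v v₀
      rw [← hk₂] at this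
      rw [← this]
      exact (mul_inv_cancel_left₀ (hsd v).ne' _).symm
    have hsum : (0:ℝ) < ∑ v, (G.degree v : ℝ) :=
      Finset.sum_pos (fun v _ => hdegR v) ⟨v₀, Finset.mem_univ v₀⟩
    have hdot12 : y₁ ⬝ᵥ y₂ = k₁ * k₂ * ∑ v, (G.degree v : ℝ) := by
      rw [dotProduct, Finset.mul_sum]
      refine Finset.sum_congr rfl fun v _ => ?_
      rw [hy1v v, hy2v v]
      calc Real.sqrt (G.degree v) * k₁ * (Real.sqrt (G.degree v) * k₂)
          = Real.sqrt (G.degree v)^2 * (k₁ * k₂) := by ring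
        _ = k₁ * k₂ * (G.degree v) := by rw [hsd2 v]; ring
    rw [h12] at hdot12
    have hk0 : k₁ = 0 ∨ k₂ = 0 := by
      rcases mul_eq_zero.mp hdot12.symm with h' | h'
      · exact mul_eq_zero.mp h'
      · exact absurd h' hsum.ne'
    rcases hk0 with hk | hk
    · have : y₁ ⬝ᵥ y₁ = 0 := by
        rw [dotProduct]
        refine Finset.sum_eq_zero fun v _ => ?_
        rw [hy1v v, hk]; ring
      rw [h11] at this; exact one_ne_zero this
    · have : y₂ ⬝ᵥ y₂ = 0 := by
        rw [dotProduct]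
        refine Finset.sum_eq_zero fun v _ => ?_
        rw [hy2v v, hk]; ring
      rw [h22] at this; exact one_ne_zero this
  -- the top eigenvector of Sγ
  set z : Fin N → ℝ := (hSγ.eigenvectorBasis (σγ i₁) : Fin N → ℝ) with hzdef
  -- choose coefficients p q with w ⊥ z
  obtain ⟨p, q, hpq, horth⟩ :
      ∃ p q : ℝ, ¬(p = 0 ∧ q = 0) ∧
        z ⬝ᵥ (fun v => Real.sqrt (γ + G.degree v) *
          ((Real.sqrt (G.degree v))⁻¹ * (p * y₁ v + q * y₂ v))) = 0 := by
    set c₁ : ℝ := z ⬝ᵥ (fun v => Real.sqrt (γ + G.degree v) *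
      ((Real.sqrt (G.degree v))⁻¹ * y₁ v)) with hc₁
    set c₂ : ℝ := z ⬝ᵥ (fun v => Real.sqrt (γ + G.degree v) *
      ((Real.sqrt (G.degree v))⁻¹ * y₂ v)) with hc₂
    have hexp : ∀ p q : ℝ, z ⬝ᵥ (fun v => Real.sqrt (γ + G.degree v) *
        ((Real.sqrt (G.degree v))⁻¹ * (p * y₁ v + q * y₂ v))) = p * c₁ + q * c₂ := by
      intro p q
      rw [hc₁, hc₂]
      simp only [dotProduct, Finset.mul_sum]
      rw [← Finset.sum_add_distrib]
      exact Finset.sum_congr rfl fun v _ => by ring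
    by_cases h : c₁ = 0 ∧ c₂ = 0
    · exact ⟨1, 0, by simp, by rw [hexp, h.1, h.2]; ring⟩
    · refine ⟨c₂, -c₁, ?_, by rw [hexp]; ring⟩
      rintro ⟨h2, h1⟩
      exact h ⟨by linarith [neg_eq_zero.mp h1], h2⟩
  -- the test vectors
  set y : Fin N → ℝ := fun v => p * y₁ v + q * y₂ v with hydef
  set x : Fin N → ℝ := fun v => (Real.sqrt (G.degree v))⁻¹ * y v with hxdef
  set w : Fin N → ℝ := fun v => Real.sqrt (γ + G.degree v) * x v with hwdef
  have horthw : z ⬝ᵥ w = 0 := horth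
  have hpqpos : 0 < p^2 + q^2 := by
    rcases not_and_or.mp hpq with h | h
    · have : 0 < p^2 := by positivity
      nlinarith [sq_nonneg q]
    · have : 0 < q^2 := by positivity
      nlinarith [sq_nonneg p]
  -- values of the quadratic forms on y
  have hyy : y ⬝ᵥ y = p^2 + q^2 := by
    have hexp : y ⬝ᵥ y = p^2 * (y₁ ⬝ᵥ y₁) + (2*p*q) * (y₁ ⬝ᵥ y₂) + q^2 * (y₂ ⬝ᵥ y₂) := by
      simp only [hydef, dotProduct, Finset.mul_sum]
      rw [← Finset.sum_add_distrib, ← Finset.sum_add_distrib]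
      exact Finset.sum_congr rfl fun v _ => by ring
    rw [hexp, h11, h22, h12]; ring
  have hySy : y ⬝ᵥ (S *ᵥ y) = p^2 * μ i₂ + q^2 * μ i₁ := by
    have hysmul : y = p • y₁ + q • y₂ := by funext v; simp [hydef]
    have hSy : S *ᵥ y = (p * μ i₂) • y₁ + (q * μ i₁) • y₂ := by
      rw [hysmul, mulVec_add, mulVec_smul, mulVec_smul, eig1, eig2, smul_smul, smul_smul]
    rw [hSy, hysmul]
    simp only [add_dotProduct, dotProduct_add, smul_dotProduct, dotProduct_smul, smul_eq_mul,
      h11, h22, h12]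
    have h21 : y₂ ⬝ᵥ y₁ = 0 := by rw [dotProduct_comm]; exact h12
    rw [h21]; ring
  -- translate to x
  have hdD : ∑ v, (G.degree v : ℝ) * x v^2 = p^2 + q^2 := by
    have := hNorm y
    rw [hyy] at this
    rw [hxdef]
    exact this.symm
  have haA : x ⬝ᵥ (G.adjMatrix ℝ *ᵥ x) = p^2 * μ i₂ + q^2 * μ i₁ := by
    have := hSquad y
    rw [hySy] at this
    rw [hxdef]
    exact this.symm
  have ha_le : x ⬝ᵥ (G.adjMatrix ℝ *ᵥ x) ≤ ∑ v, (G.degree v : ℝ) * x v^2 := hLap x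
  have ha_ge : μ i₂ * (p^2 + q^2) ≤ x ⬝ᵥ (G.adjMatrix ℝ *ᵥ x) := by
    rw [haA]
    nlinarith [sq_nonneg q, hμle]
  -- x is nonzero
  set xn : ℝ := ∑ v, x v^2 with hxn
  have hxnpos : 0 < xn := by
    rcases (Finset.sum_nonneg (fun v (_ : v ∈ Finset.univ) => sq_nonneg (x v))).lt_or_eq with h | h
    · exact h
    exfalso
    have hzero : ∀ v ∈ Finset.univ, x v ^ 2 = 0 :=
      (Finset.sum_eq_zero_iff_of_nonneg (fun v _ => sq_nonneg (x v))).mp h.symm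
    have : ∑ v, (G.degree v : ℝ) * x v^2 = 0 :=
      Finset.sum_eq_zero fun v hv => by rw [hzero v hv, mul_zero]
    rw [hdD] at this
    linarith
  -- quadratic forms on w
  have hwSw : w ⬝ᵥ (Sγ *ᵥ w) = γ * xn + x ⬝ᵥ (G.adjMatrix ℝ *ᵥ x) := by
    rw [hSγdef, ← mulVec_mulVec, ← mulVec_mulVec]
    have h1 : Matrix.diagonal (fun v => (Real.sqrt (γ + G.degree v))⁻¹) *ᵥ w = x := by
      funext v
      rw [mulVec_diagonal, hwdef]
      exact inv_mul_cancel_left₀ (hsg v).ne' (x v)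
    rw [h1, add_mulVec, smul_mulVec, one_mulVec]
    have h2 : ∀ t : Fin N → ℝ,
        w ⬝ᵥ (Matrix.diagonal (fun v => (Real.sqrt (γ + G.degree v))⁻¹) *ᵥ t) = x ⬝ᵥ t := by
      intro t
      simp only [dotProduct, mulVec_diagonal, hwdef]
      refine Finset.sum_congr rfl fun v _ => ?_
      have hne := (hsg v).ne'
      field_simp
    rw [h2, dotProduct_add, dotProduct_smul, smul_eq_mul]
    have h3 : x ⬝ᵥ x = xn := by
      rw [hxn, dotProduct]
      exact Finset.sum_congr rfl fun v _ => (sq (x v)).symm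
    rw [h3]
  have hww : w ⬝ᵥ w = γ * xn + ∑ v, (G.degree v : ℝ) * x v^2 := by
    have hstep : w ⬝ᵥ w = ∑ v, (γ * x v^2 + (G.degree v : ℝ) * x v^2) := by
      rw [dotProduct]
      refine Finset.sum_congr rfl fun v _ => ?_
      have : w v * w v = Real.sqrt (γ + G.degree v)^2 * x v^2 := by rw [hwdef]; ring
      rw [this, hsg2 v]; ring
    rw [hstep, Finset.sum_add_distrib, hxn, Finset.mul_sum]
  -- the key spectral bound: w ⊥ top eigenvector of Sγ
  have key : w ⬝ᵥ (Sγ *ᵥ w) ≤ μγ i₂ * (w ⬝ᵥ w) := by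
    rw [parseval_quad Sγ hSγ w, parseval_sq Sγ hSγ w, Finset.mul_sum]
    refine Finset.sum_le_sum fun i _ => ?_
    by_cases hi : i = σγ i₁
    · subst hi
      have h0 : (hSγ.eigenvectorBasis (σγ i₁) : Fin N → ℝ) ⬝ᵥ w = 0 := horthw
      rw [h0]
      simp
    · have hne' : σγ.symm i ≠ i₁ := fun h => hi (by rw [← h, Equiv.apply_symm_apply])
      have hle : (σγ.symm i : Fin N) ≤ i₂ := by
        rw [Fin.le_def]
        have h1 := (σγ.symm i).isLt
        have h2 : (σγ.symm i).val ≠ (i₁ : Fin N).val := fun h => hne' (Fin.ext h)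
        simp only [hi₁def] at h2
        simp only [hi₂def]
        omega
      have heq : hSγ.eigenvalues i = μγ (σγ.symm i) := by
        rw [hμγ, Function.comp_apply, Equiv.apply_symm_apply]
      have : hSγ.eigenvalues i ≤ μγ i₂ := heq ▸ hμγmono hle
      exact mul_le_mul_of_nonneg_right this (sq_nonneg _)
  -- final arithmetic
  have hT : 0 < γ * xn + ∑ v, (G.degree v : ℝ) * x v^2 := by
    have h' := mul_pos hγ hxnpos
    rw [hdD]
    linarith [hpqpos]
  have h1 : γ * xn + x ⬝ᵥ (G.adjMatrix ℝ *ᵥ x)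
      ≤ μγ i₂ * (γ * xn + ∑ v, (G.degree v : ℝ) * x v^2) := by
    rw [← hwSw, ← hww]; exact key
  have h2 : μ i₂ * (γ * xn + ∑ v, (G.degree v : ℝ) * x v^2)
      < γ * xn + x ⬝ᵥ (G.adjMatrix ℝ *ᵥ x) := by
    rw [hdD]
    have hgx : 0 < γ * xn := mul_pos hγ hxnpos
    have hmul : μ i₂ * (γ * xn) < 1 * (γ * xn) := mul_lt_mul_of_pos_right hlt1 hgx
    linarith [hmul, ha_ge]
  have h3 : μ i₂ * (γ * xn + ∑ v, (G.degree v : ℝ) * x v^2)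
      < μγ i₂ * (γ * xn + ∑ v, (G.degree v : ℝ) * x v^2) := lt_of_lt_of_le h2 h1
  exact lt_of_mul_lt_mul_right h3 hT.le
end

section
/- Let G be a finite simple connected graph on N ≥ 2 vertices with adjacency matrix A, diagonal degree matrix D, maximum vertex degree d_max, and (unweighted shortest-path) diameter diam(G) ≥ 4. Let S̃_adj = (I + D)^{-1/2}(I + A)(I + D)^{-1/2} be the augmented normalized adjacency operator. Then its second largest eigenvalue satisfies λ_{N−1}(S̃_adj) > 2√(d_max − 1)/d_max − (2/diam(G))·(1 + 2√(d_max − 1)/d_max), where eigenvalues are listed in nondecreasing order λ₁ ≤ ⋯ ≤ λ_N. -/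
open Matrix

set_option linter.unusedSectionVars false

lemma dot_self_pos {n : Type*} [Fintype n] {a : n → ℝ} (ha : a ≠ 0) : 0 < a ⬝ᵥ a := by
  obtain ⟨i, hi⟩ := Function.ne_iff.mp ha
  exact Finset.sum_pos' (fun j _ => mul_self_nonneg _)
    ⟨i, Finset.mem_univ i, mul_self_pos.mpr hi⟩

lemma quad_form_eq {N : ℕ} (S : Matrix (Fin N) (Fin N) ℝ) (hS : S.IsHermitian)
    (x y : Fin N → ℝ) :
    x ⬝ᵥ (S *ᵥ y) = ∑ i, hS.eigenvalues i *
      (((star (hS.eigenvectorUnitary : Matrix (Fin N) (Fin N) ℝ)) *ᵥ x) i *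
       ((star (hS.eigenvectorUnitary : Matrix (Fin N) (Fin N) ℝ)) *ᵥ y) i) := by
  set U := (hS.eigenvectorUnitary : Matrix (Fin N) (Fin N) ℝ) with hU
  have hsU : star U = Uᵀ := by
    rw [Matrix.star_eq_conjTranspose, Matrix.conjTranspose_eq_transpose_of_trivial]
  have hspec : S = U * Matrix.diagonal hS.eigenvalues * star U := by
    have := hS.spectral_theorem
    simpa using this
  conv_lhs => rw [hspec]
  rw [← Matrix.mulVec_mulVec, ← Matrix.mulVec_mulVec, Matrix.dotProduct_mulVec,
    ← Matrix.mulVec_transpose, ← hsU]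
  rw [dotProduct, Finset.sum_congr rfl]
  intro i _
  rw [Matrix.mulVec_diagonal]
  ring

lemma dot_eq {N : ℕ} (S : Matrix (Fin N) (Fin N) ℝ) (hS : S.IsHermitian)
    (x y : Fin N → ℝ) :
    x ⬝ᵥ y = ∑ i,
      (((star (hS.eigenvectorUnitary : Matrix (Fin N) (Fin N) ℝ)) *ᵥ x) i *
       ((star (hS.eigenvectorUnitary : Matrix (Fin N) (Fin N) ℝ)) *ᵥ y) i) := by
  set U := (hS.eigenvectorUnitary : Matrix (Fin N) (Fin N) ℝ) with hU
  have hsU : star U = Uᵀ := by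
    rw [Matrix.star_eq_conjTranspose, Matrix.conjTranspose_eq_transpose_of_trivial]
  have h1 : U * star U = 1 := (Matrix.mem_unitaryGroup_iff).mp hS.eigenvectorUnitary.2
  have : (star U *ᵥ x) ⬝ᵥ (star U *ᵥ y) = x ⬝ᵥ y := by
    rw [Matrix.dotProduct_mulVec, ← Matrix.mulVec_transpose, Matrix.mulVec_mulVec, hsU,
      Matrix.transpose_transpose, ← hsU, h1, Matrix.one_mulVec]
  rw [← this, dotProduct]

lemma second_eig_lt {N : ℕ} (hN : 2 ≤ N) (S : Matrix (Fin N) (Fin N) ℝ) (hS : S.IsHermitian)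
    (μ : Fin N → ℝ) (hμmono : Monotone μ) (σ : Equiv.Perm (Fin N)) (hμ : μ = hS.eigenvalues ∘ σ)
    (θ : ℝ) (a b : Fin N → ℝ) (ha0 : a ≠ 0) (hb0 : b ≠ 0)
    (ha : θ * (a ⬝ᵥ a) < a ⬝ᵥ (S *ᵥ a)) (hb : θ * (b ⬝ᵥ b) < b ⬝ᵥ (S *ᵥ b))
    (hab : a ⬝ᵥ b = 0) (hSab : a ⬝ᵥ (S *ᵥ b) = 0) :
    θ < μ ⟨N - 2, by omega⟩ := by
  have hba : b ⬝ᵥ a = 0 := by rw [dotProduct_comm]; exact hab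
  have hSba : b ⬝ᵥ (S *ᵥ a) = 0 := by
    rw [quad_form_eq S hS b a, ← hSab, quad_form_eq S hS a b]
    exact Finset.sum_congr rfl (fun i _ => by ring)
  set U := (hS.eigenvectorUnitary : Matrix (Fin N) (Fin N) ℝ) with hUdef
  have hev : ∀ i : Fin N, i ≠ σ ⟨N - 1, by omega⟩ → hS.eigenvalues i ≤ μ ⟨N - 2, by omega⟩ := by
    intro i hi
    have h1 : μ (σ.symm i) = hS.eigenvalues i := by
      rw [hμ]; simp
    have h2 : σ.symm i ≠ ⟨N - 1, by omega⟩ := by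
      intro h
      apply hi
      rw [← h]; simp
    have h4 : ((σ.symm i : Fin N) : ℕ) ≠ N - 1 := fun h => h2 (Fin.ext h)
    have h5 : ((σ.symm i : Fin N) : ℕ) < N := (σ.symm i).isLt
    have h3 : σ.symm i ≤ (⟨N - 2, by omega⟩ : Fin N) := by
      rw [Fin.le_def]
      show ((σ.symm i : Fin N) : ℕ) ≤ N - 2
      omega
    calc hS.eigenvalues i = μ (σ.symm i) := h1.symm
      _ ≤ μ ⟨N - 2, by omega⟩ := hμmono h3
  have key : ∃ x : Fin N → ℝ, ((star U) *ᵥ x) (σ ⟨N - 1, by omega⟩) = 0 ∧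
      θ * (x ⬝ᵥ x) < x ⬝ᵥ (S *ᵥ x) ∧ 0 < x ⬝ᵥ x := by
    set α := ((star U) *ᵥ a) (σ ⟨N - 1, by omega⟩) with hα
    set β := ((star U) *ᵥ b) (σ ⟨N - 1, by omega⟩) with hβ
    by_cases hcase : α = 0 ∧ β = 0
    · exact ⟨a, by rw [← hα, hcase.1], ha, dot_self_pos ha0⟩
    · have hone : α ≠ 0 ∨ β ≠ 0 := by tauto
      refine ⟨β • a - α • b, ?_, ?_, ?_⟩
      · rw [Matrix.mulVec_sub, Matrix.mulVec_smul, Matrix.mulVec_smul]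
        simp only [Pi.sub_apply, Pi.smul_apply, smul_eq_mul, ← hα, ← hβ]
        ring
      · have e1 : (β • a - α • b) ⬝ᵥ (β • a - α • b) = β^2 * (a ⬝ᵥ a) + α^2 * (b ⬝ᵥ b) := by
          simp only [sub_dotProduct, dotProduct_sub, smul_dotProduct,
            dotProduct_smul, smul_eq_mul, hab, hba]
          ring
        have e2 : (β • a - α • b) ⬝ᵥ (S *ᵥ (β • a - α • b))
            = β^2 * (a ⬝ᵥ (S *ᵥ a)) + α^2 * (b ⬝ᵥ (S *ᵥ b)) := by
          rw [Matrix.mulVec_sub, Matrix.mulVec_smul, Matrix.mulVec_smul]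
          simp only [sub_dotProduct, dotProduct_sub, smul_dotProduct,
            dotProduct_smul, smul_eq_mul, hSab, hSba]
          ring
        rw [e1, e2]
        rcases hone with h | h
        · have h2 : 0 < α^2 := by positivity
          nlinarith [sq_nonneg β, dot_self_pos ha0, dot_self_pos hb0]
        · have h2 : 0 < β^2 := by positivity
          nlinarith [sq_nonneg α, dot_self_pos ha0, dot_self_pos hb0]
      · have e1 : (β • a - α • b) ⬝ᵥ (β • a - α • b) = β^2 * (a ⬝ᵥ a) + α^2 * (b ⬝ᵥ b) := by
          simp only [sub_dotProduct, dotProduct_sub, smul_dotProduct,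
            dotProduct_smul, smul_eq_mul, hab, hba]
          ring
        rw [e1]
        rcases hone with h | h
        · have h2 : 0 < α^2 := by positivity
          nlinarith [sq_nonneg β, dot_self_pos ha0, dot_self_pos hb0]
        · have h2 : 0 < β^2 := by positivity
          nlinarith [sq_nonneg α, dot_self_pos ha0, dot_self_pos hb0]
  obtain ⟨x, hx0, hxq, hxx⟩ := key
  have h1 : x ⬝ᵥ (S *ᵥ x) ≤ μ ⟨N - 2, by omega⟩ * (x ⬝ᵥ x) := by
    rw [quad_form_eq S hS x x, dot_eq S hS x x, Finset.mul_sum]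
    apply Finset.sum_le_sum
    intro i _
    by_cases hi : i = σ ⟨N - 1, by omega⟩
    · subst hi; rw [hx0]; simp
    · have := hev i hi
      have hnn : 0 ≤ ((star U) *ᵥ x) i * ((star U) *ᵥ x) i := mul_self_nonneg _
      nlinarith
  have h2 : θ * (x ⬝ᵥ x) < μ ⟨N - 2, by omega⟩ * (x ⬝ᵥ x) := lt_of_lt_of_le hxq h1
  exact lt_of_mul_lt_mul_right h2 hxx.le

lemma diamond' (q t r θ : ℝ) (hq : 1 ≤ q) (ht4 : 4 ≤ t) (ht5 : t ≤ 5*r) (hrt : 2*r+2 ≤ t)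
    (hr : 1 ≤ r)
    (hθ : θ = 2*q/(q^2+1) - (2/t)*(1 + 2*q/(q^2+1))) :
    θ * q^2 ≤ r * ((1 - θ) + (q+1)^2/t) := by
  have ht0 : (0:ℝ) < t := by linarith
  have hq2 : (0:ℝ) < q^2+1 := by positivity
  have key : 0 ≤ r*t*(q-1)^2 + 2*r*(q+1)^2 + r*(q+1)^2*(q^2+1) + 2*q^2*(q+1)^2 - 2*q^3*t := by
    rcases le_or_gt (2*q^3) (r*(q-1)^2) with h | h
    · have e2 : (0:ℝ) ≤ (2*r+2)*r*(q-1)^2 + 2*r*(q+1)^2 + r*(q+1)^2*(q^2+1) + 2*q^2*(q+1)^2 - 2*q^3*(2*r+2) := by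
        nlinarith [sq_nonneg (q-1), sq_nonneg (q*(q-1)), mul_nonneg (sub_nonneg.mpr hr) (sq_nonneg (q-1)), sq_nonneg r, mul_pos (lt_of_lt_of_le zero_lt_one hq) (lt_of_lt_of_le zero_lt_one hr)]
      nlinarith [mul_nonneg (sub_nonneg.mpr hrt) (sub_nonneg.mpr h)]
    · have e5 : (0:ℝ) ≤ 5*r^2*(q-1)^2 + (q^4 - 8*q^3 + 4*q^2 + 6*q + 3)*r + 2*q^2*(q+1)^2 := by
        nlinarith [sq_nonneg ((q-1)*r - q*(q+1)), sq_nonneg ((q-1)*r - 2*q), sq_nonneg (q-1), sq_nonneg (q-2), sq_nonneg (q-3), mul_nonneg (sub_nonneg.mpr hr) (sq_nonneg (q-1)), sq_nonneg (q*(q-3)), sq_nonneg ((q-1)*r), mul_nonneg (sub_nonneg.mpr hq) (sub_nonneg.mpr hr)]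
      have e5' : (0:ℝ) ≤ r*(5*r)*(q-1)^2 + 2*r*(q+1)^2 + r*(q+1)^2*(q^2+1) + 2*q^2*(q+1)^2 - 2*q^3*(5*r) := by nlinarith [e5]
      nlinarith [mul_nonneg (sub_nonneg.mpr ht5) (sub_nonneg.mpr h.le)]
  have expand : r * ((1 - θ) + (q+1)^2/t) - θ*q^2
      = (r*t*(q-1)^2 + 2*r*(q+1)^2 + r*(q+1)^2*(q^2+1) + 2*q^2*(q+1)^2 - 2*q^3*t) / (t*(q^2+1)) := by
    rw [hθ]; field_simp; ring
  have : 0 ≤ r * ((1 - θ) + (q+1)^2/t) - θ*q^2 := by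
    rw [expand]; positivity
  linarith

lemma scalarA' (q t θ : ℝ) (hq : 1 ≤ q) (ht4 : 4 ≤ t)
    (hθ : θ = 2*q/(q^2+1) - (2/t)*(1 + 2*q/(q^2+1))) :
    θ < 1 ∧ q - θ*(q^2+1)/2 = (q+1)^2/t ∧ θ ≤ 1 := by
  have ht0 : (0:ℝ) < t := by linarith
  have hq2 : (0:ℝ) < q^2+1 := by positivity
  have hc1 : 2*q/(q^2+1) ≤ 1 := by
    rw [div_le_one hq2]; nlinarith [sq_nonneg (q-1)]
  have hcpos : 0 < 1 + 2*q/(q^2+1) := by positivity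
  have h1 : θ < 1 := by
    rw [hθ]
    have : 0 < (2/t) * (1 + 2*q/(q^2+1)) := by positivity
    linarith
  refine ⟨h1, ?_, h1.le⟩
  rw [hθ]; field_simp; ring

section GraphLemmas
open Finset
variable {V : Type*} [Fintype V] [DecidableEq V] {G : SimpleGraph V} [DecidableRel G.Adj]

lemma adj_dist_le' (hconn : G.Connected) {u a b : V} (hab : G.Adj a b) :
    G.dist u b ≤ G.dist u a + 1 := by
  have h1 : G.dist u b ≤ G.dist u a + G.dist a b := hconn.dist_triangle
  have h2 : G.dist a b ≤ 1 := by
    have := SimpleGraph.dist_le (SimpleGraph.Walk.cons hab SimpleGraph.Walk.nil)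
    simpa using this
  omega

lemma exists_back' (hconn : G.Connected) {u w : V} (hw : 1 ≤ G.dist u w) :
    ∃ x, G.Adj w x ∧ G.dist u x + 1 = G.dist u w := by
  obtain ⟨p, hp⟩ := hconn.exists_walk_length_eq_dist u w
  have hne : w ≠ u := by
    intro h; subst h; rw [SimpleGraph.dist_self] at hw; omega
  obtain ⟨x, hadj, q, hq⟩ := SimpleGraph.Walk.exists_eq_cons_of_ne hne p.reverse
  have hlen : p.reverse.length = G.dist u w := by rw [SimpleGraph.Walk.length_reverse, hp]
  have hxq : q.length = G.dist u w - 1 := by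
    rw [hq] at hlen; simp at hlen; omega
  have hdx : G.dist u x ≤ G.dist u w - 1 := by
    have := SimpleGraph.dist_le q.reverse
    rw [SimpleGraph.Walk.length_reverse, hxq] at this
    exact this
  have hdw : G.dist u w ≤ G.dist u x + 1 := adj_dist_le' hconn hadj.symm
  exact ⟨x, hadj, by omega⟩

lemma two_le_maxDegree' (hconn : G.Connected) {u v : V} (huv : 2 ≤ G.dist u v) :
    2 ≤ G.maxDegree := by
  obtain ⟨x, hx, hdx⟩ := exists_back' hconn (by omega : 1 ≤ G.dist u v)
  have h1 : 1 ≤ G.dist u x := by omega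
  obtain ⟨y, hy, hdy⟩ := exists_back' hconn h1
  have hxy : v ≠ y := by
    intro h; subst h; omega
  have : 2 ≤ G.degree x := by
    rw [← SimpleGraph.card_neighborFinset_eq_degree]
    apply Finset.one_lt_card.mpr
    exact ⟨v, (SimpleGraph.mem_neighborFinset _ _ _).mpr hx.symm,
           y, (SimpleGraph.mem_neighborFinset _ _ _).mpr hy, hxy⟩
  calc 2 ≤ G.degree x := this
    _ ≤ G.maxDegree := SimpleGraph.degree_le_maxDegree G x

-- level counting: n_{j+1} ≤ (d-1) n_j for j ≥ 1
lemma level_step (hconn : G.Connected) (u : V) {j : ℕ} (hj : 1 ≤ j) :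
    (Finset.univ.filter (fun w => G.dist u w = j + 1)).card ≤
    (G.maxDegree - 1) * (Finset.univ.filter (fun w => G.dist u w = j)).card := by
  set L1 : Finset V := Finset.univ.filter (fun w => G.dist u w = j + 1) with hL1
  set L0 : Finset V := Finset.univ.filter (fun w => G.dist u w = j) with hL0
  have hsub : L1 ⊆ L0.biUnion (fun w => G.neighborFinset w ∩ L1) := by
    intro x hx
    have hx' : G.dist u x = j + 1 := by
      have := Finset.mem_filter.mp hx
      exact this.2
    obtain ⟨y, hyx, hyd⟩ := exists_back' hconn (by omega : 1 ≤ G.dist u x)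
    rw [Finset.mem_biUnion]
    refine ⟨y, ?_, ?_⟩
    · rw [hL0, Finset.mem_filter]; exact ⟨Finset.mem_univ _, by omega⟩
    · rw [Finset.mem_inter, SimpleGraph.mem_neighborFinset]
      exact ⟨hyx.symm, hx⟩

  calc L1.card ≤ (L0.biUnion (fun w => G.neighborFinset w ∩ L1)).card := Finset.card_le_card hsub
    _ ≤ ∑ w ∈ L0, (G.neighborFinset w ∩ L1).card := Finset.card_biUnion_le
    _ ≤ ∑ _w ∈ L0, (G.maxDegree - 1) := by
        apply Finset.sum_le_sum
        intro w hw
        rw [hL0, Finset.mem_filter] at hw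
        obtain ⟨z, hzw, hzd⟩ := exists_back' hconn (by omega : 1 ≤ G.dist u w)
        have hz1 : z ∈ G.neighborFinset w := (SimpleGraph.mem_neighborFinset _ _ _).mpr hzw
        have hz2 : z ∉ G.neighborFinset w ∩ L1 := by
          rw [Finset.mem_inter, hL1, Finset.mem_filter]
          rintro ⟨-, -, hz⟩; omega
        have hss : G.neighborFinset w ∩ L1 ⊂ G.neighborFinset w :=
          ⟨Finset.inter_subset_left, fun hsub' => hz2 (hsub' hz1)⟩
        have := Finset.card_lt_card hss
        have hdeg : G.degree w ≤ G.maxDegree := SimpleGraph.degree_le_maxDegree G w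
        rw [SimpleGraph.card_neighborFinset_eq_degree] at this
        omega
    _ = (G.maxDegree - 1) * L0.card := by rw [Finset.sum_const, smul_eq_mul, mul_comm]

lemma level_chain' (hconn : G.Connected) (u : V) {j r : ℕ} (hj : 1 ≤ j) (hjr : j ≤ r) :
    (Finset.univ.filter (fun w => G.dist u w = r)).card ≤
    (G.maxDegree - 1)^(r - j) * (Finset.univ.filter (fun w => G.dist u w = j)).card := by
  induction r with
  | zero => omega
  | succ n ih =>
    rcases Nat.lt_or_ge j (n+1) with h | h
    · have hjn : j ≤ n := by omega
      have h1 := level_step hconn u (by omega : 1 ≤ n)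
      have h2 := ih hjn
      calc (Finset.univ.filter (fun w => G.dist u w = n+1)).card
          ≤ (G.maxDegree - 1) * (Finset.univ.filter (fun w => G.dist u w = n)).card := h1
        _ ≤ (G.maxDegree - 1) * ((G.maxDegree - 1)^(n - j) * (Finset.univ.filter (fun w => G.dist u w = j)).card) := by
            exact Nat.mul_le_mul_left _ h2
        _ = (G.maxDegree - 1)^(n + 1 - j) * (Finset.univ.filter (fun w => G.dist u w = j)).card := by
            rw [← mul_assoc, ← pow_succ']
            congr 2
            omega
    · have : j = n + 1 := by omega
      subst this
      simp

-- double counting swap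
lemma count_swap' (G : SimpleGraph V) [DecidableRel G.Adj] (P : V → Prop) [DecidablePred P] :
    ∑ a ∈ Finset.univ.filter P, ((G.neighborFinset a).filter (fun b => ¬ P b)).card
  = ∑ a ∈ Finset.univ.filter (fun a => ¬ P a), ((G.neighborFinset a).filter P).card := by
  have e : ∀ (Q R : V → Prop) (_ : DecidablePred Q) (_ : DecidablePred R),
      ∑ a ∈ Finset.univ.filter Q, ((G.neighborFinset a).filter R).card
      = ∑ a, ∑ b, if Q a ∧ G.Adj a b ∧ R b then 1 else 0 := by
    intro Q R _ _
    rw [Finset.sum_filter]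
    refine Finset.sum_congr rfl fun a _ => ?_
    by_cases hQ : Q a
    · rw [if_pos hQ, Finset.card_filter]
      rw [SimpleGraph.neighborFinset_eq_filter, Finset.sum_filter]
      refine Finset.sum_congr rfl fun b _ => ?_
      by_cases hA : G.Adj a b <;> by_cases hR : R b <;> simp [hA, hR, hQ]
    · rw [if_neg hQ]
      rw [Finset.sum_eq_zero]
      intro b _
      simp [hQ]
  rw [e P (fun b => ¬ P b) inferInstance inferInstance,
      e (fun a => ¬ P a) P inferInstance inferInstance, Finset.sum_comm]
  refine Finset.sum_congr rfl fun a _ => Finset.sum_congr rfl fun b _ => ?_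
  by_cases h1 : P a <;> by_cases h2 : P b <;> by_cases h3 : G.Adj a b <;>
    simp [h1, h2, h3, G.adj_comm]

lemma nbr_sum_symm' (G : SimpleGraph V) [DecidableRel G.Adj] (h : V → V → ℝ) :
    ∑ a, ∑ b ∈ G.neighborFinset a, h a b = ∑ a, ∑ b ∈ G.neighborFinset a, h b a := by
  have e : ∀ (f : V → V → ℝ), (∑ a, ∑ b ∈ G.neighborFinset a, f a b)
      = ∑ a, ∑ b, if G.Adj a b then f a b else 0 := by
    intro f
    refine Finset.sum_congr rfl fun a _ => ?_
    rw [SimpleGraph.neighborFinset_eq_filter, Finset.sum_filter]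
  rw [e, e, Finset.sum_comm]
  refine Finset.sum_congr rfl fun a _ => Finset.sum_congr rfl fun b _ => ?_
  by_cases hA : G.Adj a b <;> simp [hA, G.adj_comm]

-- per-vertex bound
lemma pv_bound' (hconn : G.Connected) (u : V) (r : ℕ)
    (p θ κ : ℝ) (hp0 : 0 < p) (hθ1 : θ ≤ 1) (hκ0 : 0 ≤ κ)
    (hpairS : ∀ m : ℕ, p^(m+1) * p^m - θ/2 * ((p^(m+1))^2 + (p^m)^2) = κ * (p^(m+1))^2)
    (F : V → ℝ)
    (hFval : ∀ w, G.dist u w ≤ r → F w = p ^ (G.dist u w))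
    (hFzero : ∀ w, ¬ (G.dist u w ≤ r) → F w = 0)
    (a : V) :
    (if 1 ≤ G.dist u a ∧ G.dist u a ≤ r then κ * (p^(G.dist u a))^2 else 0)
      - θ * (p^r)^2/2 *
        (if G.dist u a ≤ r
          then (((G.neighborFinset a).filter (fun b => ¬ G.dist u b ≤ r)).card : ℝ)
          else (((G.neighborFinset a).filter (fun b => G.dist u b ≤ r)).card : ℝ))
      ≤ ∑ b ∈ G.neighborFinset a, (F a * F b - θ/2 * (F a^2 + F b^2)) := by
  have key0 : ∀ b, G.Adj a b → G.dist u a ≤ r → G.dist u b ≤ r →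
      0 ≤ F a * F b - θ/2 * (F a^2 + F b^2) := by
    intro b hab hda hdb
    have h1 : G.dist u b ≤ G.dist u a + 1 := adj_dist_le' hconn hab
    have h2 : G.dist u a ≤ G.dist u b + 1 := adj_dist_le' hconn hab.symm
    rw [hFval a hda, hFval b hdb]
    rcases (show G.dist u b = G.dist u a ∨ G.dist u b = G.dist u a + 1
        ∨ G.dist u a = G.dist u b + 1 by omega) with h | h | h
    · rw [h]
      nlinarith [pow_pos hp0 (G.dist u a), sq_nonneg (p ^ G.dist u a)]
    · rw [h]
      nlinarith [hpairS (G.dist u a), hκ0, sq_nonneg (p ^ (G.dist u a + 1))]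
    · rw [h]
      nlinarith [hpairS (G.dist u b), hκ0, sq_nonneg (p ^ (G.dist u b + 1))]
  rw [← Finset.sum_filter_add_sum_filter_not (G.neighborFinset a)
    (fun b => G.dist u b ≤ r) (fun b => F a * F b - θ/2 * (F a^2 + F b^2))]
  by_cases hda : G.dist u a ≤ r
  · rw [if_pos hda]
    have hfar : ∑ b ∈ (G.neighborFinset a).filter (fun b => ¬ G.dist u b ≤ r),
          (F a * F b - θ/2 * (F a^2 + F b^2))
        = -(θ/2) * (p^(G.dist u a))^2 *
          (((G.neighborFinset a).filter (fun b => ¬ G.dist u b ≤ r)).card : ℝ) := by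
      rw [Finset.sum_congr rfl (fun b hb => show F a * F b - θ/2 * (F a^2 + F b^2)
          = -(θ/2) * (p^(G.dist u a))^2 from ?_), Finset.sum_const, nsmul_eq_mul]
      · ring
      · have hb' := Finset.mem_filter.mp hb
        rw [hFzero b hb'.2, hFval a hda]; ring
    have hfarbound : -(θ * (p^r)^2/2) *
          (((G.neighborFinset a).filter (fun b => ¬ G.dist u b ≤ r)).card : ℝ)
        ≤ ∑ b ∈ (G.neighborFinset a).filter (fun b => ¬ G.dist u b ≤ r),
            (F a * F b - θ/2 * (F a^2 + F b^2)) := by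
      rcases Nat.eq_zero_or_pos ((G.neighborFinset a).filter
          (fun b => ¬ G.dist u b ≤ r)).card with h0 | hpos
      · rw [hfar, h0]; simp
      · obtain ⟨b, hb⟩ := Finset.card_pos.mp hpos
        have hb' := Finset.mem_filter.mp hb
        have hadj : G.Adj a b := (SimpleGraph.mem_neighborFinset _ _ _).mp hb'.1
        have h1 : G.dist u b ≤ G.dist u a + 1 := adj_dist_le' hconn hadj
        have har : G.dist u a = r := by
          have := hb'.2
          omega
        rw [hfar, har]
        apply le_of_eq; ring
    by_cases h1a : 1 ≤ G.dist u a
    · rw [if_pos ⟨h1a, hda⟩]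
      obtain ⟨b₀, hb₀adj, hb₀d⟩ := exists_back' hconn h1a
      have hb₀mem : b₀ ∈ (G.neighborFinset a).filter (fun b => G.dist u b ≤ r) := by
        rw [Finset.mem_filter, SimpleGraph.mem_neighborFinset]
        exact ⟨hb₀adj, by omega⟩
      have hstep : κ * (p^(G.dist u a))^2 ≤ F a * F b₀ - θ/2 * (F a^2 + F b₀^2) := by
        rw [hFval a hda, hFval b₀ (by omega)]
        rw [← hb₀d]
        linarith [hpairS (G.dist u b₀)]
      have hnear : κ * (p^(G.dist u a))^2
          ≤ ∑ b ∈ (G.neighborFinset a).filter (fun b => G.dist u b ≤ r),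
              (F a * F b - θ/2 * (F a^2 + F b^2)) := by
        refine le_trans hstep (Finset.single_le_sum (f := fun b => F a * F b - θ/2 * (F a^2 + F b^2)) ?_ hb₀mem)
        intro b hb
        have hb' := Finset.mem_filter.mp hb
        exact key0 b ((SimpleGraph.mem_neighborFinset _ _ _).mp hb'.1) hda hb'.2
      linarith [hnear, hfarbound]
    · rw [if_neg (by tauto)]
      have hnear : 0 ≤ ∑ b ∈ (G.neighborFinset a).filter (fun b => G.dist u b ≤ r),
          (F a * F b - θ/2 * (F a^2 + F b^2)) := by
        apply Finset.sum_nonneg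
        intro b hb
        have hb' := Finset.mem_filter.mp hb
        exact key0 b ((SimpleGraph.mem_neighborFinset _ _ _).mp hb'.1) hda hb'.2
      linarith [hnear, hfarbound]
  · rw [if_neg (by tauto), if_neg hda]
    have hfar : ∑ b ∈ (G.neighborFinset a).filter (fun b => ¬ G.dist u b ≤ r),
        (F a * F b - θ/2 * (F a^2 + F b^2)) = 0 := by
      apply Finset.sum_eq_zero
      intro b hb
      have hb' := Finset.mem_filter.mp hb
      rw [hFzero b hb'.2, hFzero a hda]; ring
    have hnear : ∑ b ∈ (G.neighborFinset a).filter (fun b => G.dist u b ≤ r),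
          (F a * F b - θ/2 * (F a^2 + F b^2))
        = -(θ * (p^r)^2/2) *
          (((G.neighborFinset a).filter (fun b => G.dist u b ≤ r)).card : ℝ) := by
      rw [Finset.sum_congr rfl (fun b hb => show F a * F b - θ/2 * (F a^2 + F b^2)
          = -(θ * (p^r)^2/2) from ?_), Finset.sum_const, nsmul_eq_mul]
      · ring
      · have hb' := Finset.mem_filter.mp hb
        have hadj : G.Adj a b := (SimpleGraph.mem_neighborFinset _ _ _).mp hb'.1
        have h2 : G.dist u a ≤ G.dist u b + 1 := adj_dist_le' hconn hadj.symm
        have hbr : G.dist u b = r := by omega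
        rw [hFzero a hda, hFval b hb'.2, hbr]; ring
    rw [hnear, hfar]
    apply le_of_eq; ring

lemma decomp' (F : V → ℝ) (θ : ℝ) :
    (∑ w, F w ^ 2) + (∑ w, F w * (∑ b ∈ G.neighborFinset w, F b))
      - θ * (∑ w, (1 + (G.degree w : ℝ)) * F w ^ 2)
    = (1-θ) * (∑ w, F w ^ 2)
      + ∑ a, ∑ b ∈ G.neighborFinset a, (F a * F b - θ/2 * (F a^2 + F b^2)) := by
  have e1 : ∑ w, (1 + (G.degree w : ℝ)) * F w ^ 2
      = (∑ w, F w ^ 2) + ∑ a, ∑ b ∈ G.neighborFinset a, F a ^ 2 := by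
    rw [← Finset.sum_add_distrib]
    refine Finset.sum_congr rfl fun w _ => ?_
    rw [Finset.sum_const, SimpleGraph.card_neighborFinset_eq_degree, nsmul_eq_mul]
    ring
  have e2 : ∑ w, F w * (∑ b ∈ G.neighborFinset w, F b)
      = ∑ a, ∑ b ∈ G.neighborFinset a, F a * F b :=
    Finset.sum_congr rfl fun w _ => Finset.mul_sum _ _ _
  have e3 : ∑ a, ∑ b ∈ G.neighborFinset a, (F a * F b - θ/2 * (F a^2 + F b^2))
      = (∑ a, ∑ b ∈ G.neighborFinset a, F a * F b)
        - θ/2 * ((∑ a, ∑ b ∈ G.neighborFinset a, F a ^ 2)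
                + (∑ a, ∑ b ∈ G.neighborFinset a, F b ^ 2)) := by
    have h1 : ∀ a : V, ∑ b ∈ G.neighborFinset a, (F a * F b - θ/2 * (F a^2 + F b^2))
        = (∑ b ∈ G.neighborFinset a, F a * F b)
          - θ/2 * ((∑ b ∈ G.neighborFinset a, F a ^ 2) + (∑ b ∈ G.neighborFinset a, F b ^ 2)) := by
      intro a
      rw [Finset.sum_sub_distrib]
      congr 1
      simp only [mul_add]
      rw [Finset.sum_add_distrib, ← Finset.mul_sum, ← Finset.mul_sum]
    rw [Finset.sum_congr rfl (fun a _ => h1 a), Finset.sum_sub_distrib]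
    congr 1
    simp only [mul_add]
    rw [Finset.sum_add_distrib, ← Finset.mul_sum, ← Finset.mul_sum]
  have e4 := nbr_sum_symm' G (fun a b => F b ^ 2)
  rw [e1, e2, e3, e4]
  ring

lemma group_sum' (u : V) (r : ℕ) (f : ℕ → ℝ) :
    ∑ a ∈ Finset.univ.filter (fun a => 1 ≤ G.dist u a ∧ G.dist u a ≤ r), f (G.dist u a)
    = ∑ j ∈ Finset.Icc 1 r, ((Finset.univ.filter (fun w => G.dist u w = j)).card : ℝ) * f j := by
  rw [← Finset.sum_fiberwise_of_maps_to (g := fun a => G.dist u a) (t := Finset.Icc 1 r)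
    (fun a ha => by rw [Finset.mem_filter] at ha; exact Finset.mem_Icc.mpr ⟨ha.2.1, ha.2.2⟩)]
  refine Finset.sum_congr rfl fun j hj => ?_
  rw [Finset.mem_Icc] at hj
  have hset : (Finset.univ.filter (fun a => 1 ≤ G.dist u a ∧ G.dist u a ≤ r)).filter
      (fun a => G.dist u a = j) = Finset.univ.filter (fun w => G.dist u w = j) := by
    rw [Finset.filter_filter]
    ext a
    simp only [Finset.mem_filter, Finset.mem_univ, true_and]
    omega
  rw [hset]
  calc ∑ a ∈ Finset.univ.filter (fun w => G.dist u w = j), f (G.dist u a)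
      = ∑ _a ∈ Finset.univ.filter (fun w => G.dist u w = j), f j :=
        Finset.sum_congr rfl (fun a ha => by rw [(Finset.mem_filter.mp ha).2])
    _ = _ := by rw [Finset.sum_const, nsmul_eq_mul]

lemma sf2_split' (hconn : G.Connected) (u : V) (r : ℕ) (p : ℝ) (F : V → ℝ)
    (hFval : ∀ w, G.dist u w ≤ r → F w = p ^ (G.dist u w))
    (hFzero : ∀ w, ¬ (G.dist u w ≤ r) → F w = 0) :
    ∑ w, F w ^ 2
    = 1 + ∑ a ∈ Finset.univ.filter (fun a => 1 ≤ G.dist u a ∧ G.dist u a ≤ r),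
        (p ^ (G.dist u a))^2 := by
  have h1 : ∀ w : V, F w ^ 2 = if G.dist u w ≤ r then (p^(G.dist u w))^2 else 0 := by
    intro w
    by_cases h : G.dist u w ≤ r
    · rw [if_pos h, hFval w h]
    · rw [if_neg h, hFzero w h]; ring
  rw [Finset.sum_congr rfl (fun w _ => h1 w), ← Finset.sum_filter]
  rw [← Finset.sum_filter_add_sum_filter_not
    (Finset.univ.filter (fun w => G.dist u w ≤ r)) (fun w => G.dist u w = 0)]
  congr 1
  · have hset : (Finset.univ.filter (fun w => G.dist u w ≤ r)).filter
        (fun w => G.dist u w = 0) = {u} := by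
      ext a
      simp only [Finset.filter_filter, Finset.mem_filter, Finset.mem_univ, true_and,
        Finset.mem_singleton]
      constructor
      · rintro ⟨_, h2⟩
        exact ((hconn.dist_eq_zero_iff).mp h2).symm
      · rintro rfl
        simp [SimpleGraph.dist_self]
    rw [hset, Finset.sum_singleton, SimpleGraph.dist_self, pow_zero]
    norm_num
  · have hset2 : (Finset.univ.filter (fun w => G.dist u w ≤ r)).filter
        (fun w => ¬ G.dist u w = 0)
        = Finset.univ.filter (fun a => 1 ≤ G.dist u a ∧ G.dist u a ≤ r) := by
      ext a
      simp only [Finset.filter_filter, Finset.mem_filter, Finset.mem_univ, true_and]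
      omega
    rw [hset2]

lemma level_ge' (hconn : G.Connected) (u : V) {j r : ℕ} (hj : 1 ≤ j) (hjr : j ≤ r)
    (q p : ℝ) (hq0 : 0 < q) (hp : p = q⁻¹) (hd : ((G.maxDegree : ℝ) - 1) = q^2)
    (hdn : 2 ≤ G.maxDegree) :
    ((Finset.univ.filter (fun w => G.dist u w = r)).card : ℝ) * (p^r)^2
    ≤ ((Finset.univ.filter (fun w => G.dist u w = j)).card : ℝ) * (p^j)^2 := by
  have hp0 : 0 < p := by rw [hp]; positivity
  have hqp : q * p = 1 := by rw [hp]; exact mul_inv_cancel₀ hq0.ne'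
  have hchain := level_chain' hconn u hj hjr
  have hcast : ((Finset.univ.filter (fun w => G.dist u w = r)).card : ℝ)
      ≤ ((G.maxDegree : ℝ) - 1)^(r-j) *
        ((Finset.univ.filter (fun w => G.dist u w = j)).card : ℝ) := by
    have h2 : (((G.maxDegree - 1)^(r - j) *
        (Finset.univ.filter (fun w => G.dist u w = j)).card : ℕ) : ℝ)
        = ((G.maxDegree : ℝ) - 1)^(r-j) *
          ((Finset.univ.filter (fun w => G.dist u w = j)).card : ℝ) := by
      push_cast [Nat.cast_sub (by omega : 1 ≤ G.maxDegree)]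
      ring
    rw [← h2]
    exact_mod_cast hchain
  have hsplit : (p^r)^2 = (p^j)^2 * ((p^(r-j))^2) := by
    have : r = j + (r - j) := by omega
    rw [show p^r = p^j * p^(r-j) by rw [← pow_add, ← this]]
    ring
  have hone : ((G.maxDegree : ℝ) - 1)^(r-j) * ((p^(r-j))^2) = 1 := by
    rw [hd]
    have : (q^2) * (p^2) = 1 := by
      have : (q*p)^2 = 1 := by rw [hqp]; norm_num
      nlinarith [this]
    calc (q^2)^(r-j) * (p^(r-j))^2 = ((q^2) * (p^2))^(r-j) := by
          rw [mul_pow, ← pow_mul, ← pow_mul, ← pow_mul]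
          ring_nf
      _ = 1 := by rw [this, one_pow]
  calc ((Finset.univ.filter (fun w => G.dist u w = r)).card : ℝ) * (p^r)^2
      = ((Finset.univ.filter (fun w => G.dist u w = r)).card : ℝ) * (p^j)^2 * (p^(r-j))^2 := by
        rw [hsplit]; ring
    _ ≤ (((G.maxDegree : ℝ) - 1)^(r-j) *
          ((Finset.univ.filter (fun w => G.dist u w = j)).card : ℝ)) * (p^j)^2 * (p^(r-j))^2 := by
        have hnn : (0:ℝ) ≤ (p^j)^2 * (p^(r-j))^2 := by positivity
        nlinarith [hcast, hnn]
    _ = ((Finset.univ.filter (fun w => G.dist u w = j)).card : ℝ) * (p^j)^2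
          * (((G.maxDegree : ℝ) - 1)^(r-j) * (p^(r-j))^2) := by ring
    _ = ((Finset.univ.filter (fun w => G.dist u w = j)).card : ℝ) * (p^j)^2 := by
        rw [hone, mul_one]

lemma e1_bound' (hconn : G.Connected) (u : V) (r : ℕ) (hr1 : 1 ≤ r) :
    ∑ a ∈ Finset.univ.filter (fun a => G.dist u a ≤ r),
      ((G.neighborFinset a).filter (fun b => ¬ G.dist u b ≤ r)).card
    ≤ (G.maxDegree - 1) * (Finset.univ.filter (fun w => G.dist u w = r)).card := by
  calc ∑ a ∈ Finset.univ.filter (fun a => G.dist u a ≤ r),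
        ((G.neighborFinset a).filter (fun b => ¬ G.dist u b ≤ r)).card
      ≤ ∑ a ∈ Finset.univ.filter (fun a => G.dist u a ≤ r),
          (if G.dist u a = r then G.maxDegree - 1 else 0) := by
        apply Finset.sum_le_sum
        intro a ha
        have ha' := (Finset.mem_filter.mp ha).2
        by_cases har : G.dist u a = r
        · rw [if_pos har]
          obtain ⟨z, hz, hzd⟩ := exists_back' hconn (show 1 ≤ G.dist u a by omega)
          have hz1 : z ∈ G.neighborFinset a := by
            rw [SimpleGraph.mem_neighborFinset]; exact hz
          have hz2 : z ∉ (G.neighborFinset a).filter (fun b => ¬ G.dist u b ≤ r) := by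
            rw [Finset.mem_filter]
            rintro ⟨-, hzz⟩
            omega
          have hss : (G.neighborFinset a).filter (fun b => ¬ G.dist u b ≤ r)
              ⊂ G.neighborFinset a :=
            ⟨Finset.filter_subset _ _, fun hsub' => hz2 (hsub' hz1)⟩
          have hlt := Finset.card_lt_card hss
          have hdeg : G.degree a ≤ G.maxDegree := SimpleGraph.degree_le_maxDegree G a
          rw [SimpleGraph.card_neighborFinset_eq_degree] at hlt
          omega
        · rw [if_neg har]
          have hempty : (G.neighborFinset a).filter (fun b => ¬ G.dist u b ≤ r) = ∅ := by
            rw [Finset.filter_eq_empty_iff]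
            intro b hb
            have hadjb : G.Adj a b := by rwa [SimpleGraph.mem_neighborFinset] at hb
            have hdb : G.dist u b ≤ G.dist u a + 1 := adj_dist_le' hconn hadjb
            simp only [not_not]
            omega
          rw [hempty]
          simp
    _ = (G.maxDegree - 1) * (Finset.univ.filter (fun w => G.dist u w = r)).card := by
        rw [← Finset.sum_filter, Finset.filter_filter]
        have hset : Finset.univ.filter (fun a => G.dist u a ≤ r ∧ G.dist u a = r)
            = Finset.univ.filter (fun w => G.dist u w = r) := by
          ext a
          simp only [Finset.mem_filter, Finset.mem_univ, true_and]
          omega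
        rw [hset, Finset.sum_const, smul_eq_mul, mul_comm]

set_option maxHeartbeats 1000000 in
lemma core0 (hconn : G.Connected) (u : V) (r t : ℕ)
    (hd2 : 2 ≤ G.maxDegree)
    (hr1 : 1 ≤ r) (ht4 : 4 ≤ t) (ht5 : t ≤ 5*r) (hrt : 2*r+2 ≤ t)
    (θ : ℝ) (hθ0 : 0 ≤ θ)
    (hθ : θ = 2*Real.sqrt ((G.maxDegree:ℝ)-1)/((Real.sqrt ((G.maxDegree:ℝ)-1))^2+1)
      - (2/(t:ℝ))*(1 + 2*Real.sqrt ((G.maxDegree:ℝ)-1)/((Real.sqrt ((G.maxDegree:ℝ)-1))^2+1)))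
    (F : V → ℝ)
    (hF : F = fun w => if G.dist u w ≤ r
      then ((Real.sqrt ((G.maxDegree:ℝ)-1))⁻¹) ^ (G.dist u w) else 0) :
    θ * (∑ w, (1 + (G.degree w : ℝ)) * F w ^ 2) <
      (∑ w, F w ^ 2) + ∑ w, F w * (∑ b ∈ G.neighborFinset w, F b) := by
  have hd1 : (1:ℝ) ≤ (G.maxDegree:ℝ) - 1 := by
    have : (2:ℝ) ≤ (G.maxDegree:ℝ) := by exact_mod_cast hd2
    linarith
  set q : ℝ := Real.sqrt ((G.maxDegree:ℝ)-1) with hqdef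
  have hq1 : 1 ≤ q := by
    rw [hqdef]
    have := Real.sqrt_le_sqrt hd1
    rwa [Real.sqrt_one] at this
  have hq0 : 0 < q := by linarith
  have hq2 : q^2 = (G.maxDegree:ℝ) - 1 := Real.sq_sqrt (by linarith)
  set p : ℝ := q⁻¹ with hpdef
  have hp0 : 0 < p := by positivity
  have ht0 : (0:ℝ) < (t:ℝ) := by
    have : (4:ℝ) ≤ (t:ℝ) := by exact_mod_cast ht4
    linarith
  obtain ⟨hθlt1, hA2, hθle1⟩ := scalarA' q t θ hq1 (by exact_mod_cast ht4) hθ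
  set κ : ℝ := (q+1)^2/(t:ℝ) with hκdef
  have hκ0 : 0 ≤ κ := by positivity
  have hqp : q * p = 1 := mul_inv_cancel₀ hq0.ne'
  have hpair : p - θ*(p^2+1)/2 = κ * p^2 := by
    rw [← hA2]
    have h1 : q * p^2 = p := by
      calc q * p^2 = (q*p)*p := by ring
      _ = p := by rw [hqp, one_mul]
    have h2 : (q^2+1) * p^2 = 1 + p^2 := by
      have h3 : q^2 * p^2 = 1 := by
        calc q^2*p^2 = (q*p)^2 := by ring
        _ = 1 := by rw [hqp]; norm_num
      linarith [h3]
    linear_combination (θ/2) * h2 - h1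
  have keyS : ∀ m : ℕ, p^(m+1) * p^m - θ/2 * ((p^(m+1))^2 + (p^m)^2) = κ * (p^(m+1))^2 := by
    intro m
    rw [pow_succ p m]
    linear_combination ((p^m)^2) * hpair
  have hFval : ∀ w, G.dist u w ≤ r → F w = p ^ (G.dist u w) := by
    intro w hw; rw [hF]; simp only [if_pos hw]
  have hFzero : ∀ w, ¬ (G.dist u w ≤ r) → F w = 0 := by
    intro w hw; rw [hF]; simp only [if_neg hw]
  -- abbreviations
  set nr : ℕ := (Finset.univ.filter (fun w => G.dist u w = r)).card with hnr
  set W : ℝ := ∑ a ∈ Finset.univ.filter (fun a => 1 ≤ G.dist u a ∧ G.dist u a ≤ r),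
      (p ^ (G.dist u a))^2 with hWdef
  -- sum the per-vertex bounds
  have hsum : (κ * W) - θ * (p^r)^2/2 *
      ((∑ a ∈ Finset.univ.filter (fun a => G.dist u a ≤ r),
        ((G.neighborFinset a).filter (fun b => ¬ G.dist u b ≤ r)).card : ℕ) +
       (∑ a ∈ Finset.univ.filter (fun a => ¬ G.dist u a ≤ r),
        ((G.neighborFinset a).filter (fun b => G.dist u b ≤ r)).card : ℕ) : ℝ)
      ≤ ∑ a, ∑ b ∈ G.neighborFinset a, (F a * F b - θ/2 * (F a^2 + F b^2)) := by
    have h1 : ∑ a, ((if 1 ≤ G.dist u a ∧ G.dist u a ≤ r then κ * (p^(G.dist u a))^2 else 0)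
      - θ * (p^r)^2/2 *
        (if G.dist u a ≤ r
          then (((G.neighborFinset a).filter (fun b => ¬ G.dist u b ≤ r)).card : ℝ)
          else (((G.neighborFinset a).filter (fun b => G.dist u b ≤ r)).card : ℝ)))
        ≤ ∑ a, ∑ b ∈ G.neighborFinset a, (F a * F b - θ/2 * (F a^2 + F b^2)) :=
      Finset.sum_le_sum
        (fun a _ => pv_bound' hconn u r p θ κ hp0 hθle1 hκ0 keyS F hFval hFzero a)
    have e1 : ∑ a, ((if 1 ≤ G.dist u a ∧ G.dist u a ≤ r then κ * (p^(G.dist u a))^2 else 0)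
      - θ * (p^r)^2/2 *
        (if G.dist u a ≤ r
          then (((G.neighborFinset a).filter (fun b => ¬ G.dist u b ≤ r)).card : ℝ)
          else (((G.neighborFinset a).filter (fun b => G.dist u b ≤ r)).card : ℝ)))
        = (κ * W) - θ * (p^r)^2/2 *
          ((∑ a ∈ Finset.univ.filter (fun a => G.dist u a ≤ r),
            ((G.neighborFinset a).filter (fun b => ¬ G.dist u b ≤ r)).card : ℕ) +
           (∑ a ∈ Finset.univ.filter (fun a => ¬ G.dist u a ≤ r),
            ((G.neighborFinset a).filter (fun b => G.dist u b ≤ r)).card : ℕ) : ℝ) := by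
      rw [Finset.sum_sub_distrib]
      congr 1
      · -- bonus part
        rw [← Finset.sum_filter, hWdef, Finset.mul_sum]
      · -- cnt part
        rw [← Finset.mul_sum]
        congr 1
        rw [← Finset.sum_filter_add_sum_filter_not Finset.univ (fun a => G.dist u a ≤ r)]
        push_cast
        congr 1
        · exact Finset.sum_congr rfl (fun a ha => by
            rw [if_pos (Finset.mem_filter.mp ha).2])
        · exact Finset.sum_congr rfl (fun a ha => by
            rw [if_neg (Finset.mem_filter.mp ha).2])
    rw [e1] at h1
    exact h1
  -- counting bounds
  have hswap := count_swap' G (fun a => G.dist u a ≤ r)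
  have he1 := e1_bound' hconn u r hr1
  have hcnt : ((∑ a ∈ Finset.univ.filter (fun a => G.dist u a ≤ r),
        ((G.neighborFinset a).filter (fun b => ¬ G.dist u b ≤ r)).card : ℕ) +
       (∑ a ∈ Finset.univ.filter (fun a => ¬ G.dist u a ≤ r),
        ((G.neighborFinset a).filter (fun b => G.dist u b ≤ r)).card : ℕ) : ℝ)
      ≤ 2 * ((G.maxDegree : ℝ) - 1) * (nr : ℝ) := by
    rw [← hswap]
    have : ((∑ a ∈ Finset.univ.filter (fun a => G.dist u a ≤ r),
        ((G.neighborFinset a).filter (fun b => ¬ G.dist u b ≤ r)).card : ℕ) : ℝ)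
        ≤ ((G.maxDegree : ℝ) - 1) * (nr : ℝ) := by
      have hc : (((G.maxDegree - 1) * nr : ℕ) : ℝ) = ((G.maxDegree:ℝ) - 1) * (nr : ℝ) := by
        push_cast [Nat.cast_sub (by omega : 1 ≤ G.maxDegree)]
        ring
      rw [← hc]
      exact_mod_cast he1
    push_cast
    push_cast at this
    linarith
  have hθpr : 0 ≤ θ * (p^r)^2/2 := by positivity
  have hTbound : (κ * W) - θ * (p^r)^2 * ((G.maxDegree:ℝ) - 1) * (nr:ℝ)
      ≤ ∑ a, ∑ b ∈ G.neighborFinset a, (F a * F b - θ/2 * (F a^2 + F b^2)) := by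
    refine le_trans ?_ hsum
    have := mul_le_mul_of_nonneg_left hcnt hθpr
    linarith [this]
  -- W lower bound
  have hWge : (r:ℝ) * ((nr:ℝ) * (p^r)^2) ≤ W := by
    rw [hWdef, group_sum' u r (fun j => (p^j)^2)]
    calc (r:ℝ) * ((nr:ℝ) * (p^r)^2)
        = ∑ _j ∈ Finset.Icc 1 r, ((nr:ℝ) * (p^r)^2) := by
          rw [Finset.sum_const, nsmul_eq_mul, Nat.card_Icc]
          norm_num
      _ ≤ ∑ j ∈ Finset.Icc 1 r,
            ((Finset.univ.filter (fun w => G.dist u w = j)).card : ℝ) * (p^j)^2 := by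
          apply Finset.sum_le_sum
          intro j hj
          rw [Finset.mem_Icc] at hj
          exact level_ge' hconn u hj.1 hj.2 q p hq0 hpdef hq2.symm hd2
  have hW0 : 0 ≤ W := by
    rw [hWdef]
    apply Finset.sum_nonneg
    intro a _
    positivity
  -- SF2
  have hSF2 : ∑ w, F w ^ 2 = 1 + W := by
    rw [sf2_split' hconn u r p F hFval hFzero, hWdef]
  -- diamond
  have hdia : θ * q^2 ≤ (r:ℝ) * ((1 - θ) + (q+1)^2/(t:ℝ)) := by
    apply diamond' q (t:ℝ) (r:ℝ) θ hq1 (by exact_mod_cast ht4)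
      (by exact_mod_cast ht5) (by exact_mod_cast hrt) (by exact_mod_cast hr1) hθ
  -- final assembly
  have hfinal : 0 < (∑ w, F w ^ 2) + (∑ w, F w * (∑ b ∈ G.neighborFinset w, F b))
      - θ * (∑ w, (1 + (G.degree w : ℝ)) * F w ^ 2) := by
    rw [decomp' F θ]
    have hX : (0:ℝ) ≤ (nr:ℝ) * (p^r)^2 := by positivity
    have hco : 0 ≤ (1 - θ) + κ := by linarith
    have hc2 : ((1-θ) + κ) * ((r:ℝ) * ((nr:ℝ) * (p^r)^2)) ≤ ((1-θ) + κ) * W :=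
      mul_le_mul_of_nonneg_left hWge hco
    have hd3 : θ * q^2 * ((nr:ℝ) * (p^r)^2) ≤ (r:ℝ) * ((1 - θ) + κ) * ((nr:ℝ) * (p^r)^2) := by
      apply mul_le_mul_of_nonneg_right _ hX
      rw [hκdef]
      exact hdia
    have hq2' : ((G.maxDegree:ℝ) - 1) = q^2 := hq2.symm
    calc (0:ℝ) < 1 - θ := by linarith
      _ ≤ (1-θ) * (1 + W) + κ * W - θ * q^2 * ((nr:ℝ) * (p^r)^2) := by nlinarith [hc2, hd3]
      _ = (1-θ) * (∑ w, F w ^ 2) + ((κ * W) - θ * (p^r)^2 * ((G.maxDegree:ℝ) - 1) * (nr:ℝ)) := by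
          rw [hSF2, hq2']; ring
      _ ≤ (1-θ) * (∑ w, F w ^ 2)
          + ∑ a, ∑ b ∈ G.neighborFinset a, (F a * F b - θ/2 * (F a^2 + F b^2)) := by
          linarith [hTbound]
  linarith [hfinal]

end GraphLemmas

section MatrixLemmas
open Finset
variable {N : ℕ} (G : SimpleGraph (Fin N)) [DecidableRel G.Adj]

-- quadratic form translation
lemma quad_translate0
    (Sadj : Matrix (Fin N) (Fin N) ℝ)
    (hSdef : Sadj = Matrix.diagonal (fun v => (Real.sqrt (1 + G.degree v))⁻¹) *
      ((1 : Matrix (Fin N) (Fin N) ℝ) + G.adjMatrix ℝ) *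
      Matrix.diagonal (fun v => (Real.sqrt (1 + G.degree v))⁻¹))
    (x x' : Fin N → ℝ) :
    (fun w => Real.sqrt (1 + G.degree w) * x w) ⬝ᵥ
      (Sadj *ᵥ (fun w => Real.sqrt (1 + G.degree w) * x' w))
    = (∑ w, x w * x' w) + ∑ w, x w * (∑ b ∈ G.neighborFinset w, x' b) := by
  have hpos : ∀ w : Fin N, (0:ℝ) < 1 + G.degree w := by
    intro w; positivity
  have hsq : ∀ w : Fin N, Real.sqrt (1 + G.degree w) ≠ 0 := by
    intro w
    exact (Real.sqrt_pos.mpr (hpos w)).ne'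
  set y : Fin N → ℝ := fun w => Real.sqrt (1 + G.degree w) * x w with hy
  set y' : Fin N → ℝ := fun w => Real.sqrt (1 + G.degree w) * x' w with hy'
  set D1 : Matrix (Fin N) (Fin N) ℝ := Matrix.diagonal (fun v => (Real.sqrt (1 + G.degree v))⁻¹)
    with hD1
  have hDy' : D1 *ᵥ y' = x' := by
    funext w
    rw [hD1, Matrix.mulVec_diagonal]
    rw [hy']
    dsimp only
    rw [← mul_assoc, inv_mul_cancel₀ (hsq w), one_mul]
  have step1 : Sadj *ᵥ y' = D1 *ᵥ (((1 : Matrix (Fin N) (Fin N) ℝ) + G.adjMatrix ℝ) *ᵥ x') := by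
    rw [hSdef, ← Matrix.mulVec_mulVec, ← Matrix.mulVec_mulVec, hDy']
  have step2 : y ⬝ᵥ (D1 *ᵥ (((1 : Matrix (Fin N) (Fin N) ℝ) + G.adjMatrix ℝ) *ᵥ x'))
      = x ⬝ᵥ (((1 : Matrix (Fin N) (Fin N) ℝ) + G.adjMatrix ℝ) *ᵥ x') := by
    rw [dotProduct, dotProduct]
    refine Finset.sum_congr rfl fun w _ => ?_
    rw [hD1, Matrix.mulVec_diagonal, hy]
    dsimp only
    field_simp
  rw [step1, step2]
  rw [Matrix.add_mulVec, Matrix.one_mulVec]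
  rw [dotProduct_add]
  congr 1
  refine Finset.sum_congr rfl fun w _ => ?_
  rw [SimpleGraph.adjMatrix_mulVec_apply]

lemma dot_translate0 (x x' : Fin N → ℝ) :
    (fun w => Real.sqrt (1 + G.degree w) * x w) ⬝ᵥ
      (fun w => Real.sqrt (1 + G.degree w) * x' w)
    = ∑ w, (1 + (G.degree w : ℝ)) * (x w * x' w) := by
  rw [dotProduct]
  refine Finset.sum_congr rfl fun w _ => ?_
  have h : Real.sqrt (1 + G.degree w) * Real.sqrt (1 + G.degree w) = 1 + (G.degree w : ℝ) :=
    Real.mul_self_sqrt (by positivity)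
  linear_combination (x w * x' w) * h

end MatrixLemmas

open Finset in
set_option maxHeartbeats 1000000 in
/-- **Bound on the second largest eigenvalue of the augmented normalized adjacency operator.**
For a finite simple connected graph `G` on `N ≥ 2` vertices with maximum degree `d_max`
and diameter `diam(G) ≥ 4`, the second largest eigenvalue (0-based index `N-2` in a
nondecreasing listing) of `S̃ = (I+D)^{-1/2} (I+A) (I+D)^{-1/2}` satisfies
`λ_{N-1}(S̃) > 2√(d_max - 1)/d_max - (2/diam(G)) (1 + 2√(d_max - 1)/d_max)`. -/
theorem second_largest_eigenvalue_lower_bound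
    {N : ℕ} (hN : 2 ≤ N)
    (G : SimpleGraph (Fin N)) [DecidableRel G.Adj]
    (hconn : G.Connected) (hdiam : 4 ≤ G.diam)
    (Sadj : Matrix (Fin N) (Fin N) ℝ)
    (hSdef : Sadj = Matrix.diagonal (fun v => (Real.sqrt (1 + G.degree v))⁻¹) *
      ((1 : Matrix (Fin N) (Fin N) ℝ) + G.adjMatrix ℝ) *
      Matrix.diagonal (fun v => (Real.sqrt (1 + G.degree v))⁻¹))
    (hS : Sadj.IsHermitian)
    (μ : Fin N → ℝ) (hμmono : Monotone μ)
    (σ : Equiv.Perm (Fin N)) (hμ : μ = hS.eigenvalues ∘ σ) :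
    2 * Real.sqrt ((G.maxDegree : ℝ) - 1) / (G.maxDegree : ℝ) -
      (2 / (G.diam : ℝ)) *
        (1 + 2 * Real.sqrt ((G.maxDegree : ℝ) - 1) / (G.maxDegree : ℝ)) <
      μ ⟨N - 2, by omega⟩ := by
  haveI : Nonempty (Fin N) := ⟨⟨0, by omega⟩⟩
  obtain ⟨u, v, huv⟩ := G.exists_dist_eq_diam
  set t : ℕ := G.diam with htdef
  set d : ℕ := G.maxDegree with hddef
  have ht4 : 4 ≤ t := hdiam
  have hd2 : 2 ≤ d := two_le_maxDegree' hconn (u := u) (v := v) (by rw [huv]; omega)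
  set r : ℕ := t/2 - 1 with hrdef
  have hr1 : 1 ≤ r := by omega
  have ht5 : t ≤ 5*r := by omega
  have hrt : 2*r + 2 ≤ t := by omega
  set q : ℝ := Real.sqrt ((d:ℝ) - 1) with hqdef
  have hd1 : (1:ℝ) ≤ (d:ℝ) - 1 := by
    have : (2:ℝ) ≤ (d:ℝ) := by exact_mod_cast hd2
    linarith
  have hq2 : q^2 = (d:ℝ) - 1 := Real.sq_sqrt (by linarith)
  have hq1 : 1 ≤ q := by
    rw [hqdef]
    have := Real.sqrt_le_sqrt hd1
    rwa [Real.sqrt_one] at this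
  have hq0 : 0 < q := by linarith
  have hdq : (d:ℝ) = q^2 + 1 := by rw [hq2]; ring
  set θ : ℝ := 2 * q / (d:ℝ) - (2/(t:ℝ)) * (1 + 2*q/(d:ℝ)) with hθdef
  have hθform : θ = 2*q/(q^2+1) - (2/(t:ℝ))*(1 + 2*q/(q^2+1)) := by
    rw [hθdef, hdq]
  show θ < μ ⟨N - 2, by omega⟩
  -- test functions
  set Fu : Fin N → ℝ := fun w => if G.dist u w ≤ r then (q⁻¹) ^ (G.dist u w) else 0 with hFu
  set Fv : Fin N → ℝ := fun w => if G.dist v w ≤ r then (q⁻¹) ^ (G.dist v w) else 0 with hFv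
  have hFnn : ∀ (F₀ : Fin N → ℝ) (c : Fin N),
      F₀ = (fun w => if G.dist c w ≤ r then (q⁻¹) ^ (G.dist c w) else 0) → ∀ w, 0 ≤ F₀ w := by
    intro F₀ c hdef w
    rw [hdef]
    dsimp only
    split
    · positivity
    · exact le_refl 0
  have hFunn : ∀ w, 0 ≤ Fu w := hFnn Fu u hFu
  have hFvnn : ∀ w, 0 ≤ Fv w := hFnn Fv v hFv
  have hFuu : Fu u = 1 := by
    rw [hFu]
    dsimp only
    rw [if_pos (by rw [SimpleGraph.dist_self]; omega), SimpleGraph.dist_self, pow_zero]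
  have hFvv : Fv v = 1 := by
    rw [hFv]
    dsimp only
    rw [if_pos (by rw [SimpleGraph.dist_self]; omega), SimpleGraph.dist_self, pow_zero]
  -- supports
  have hsupp : ∀ w, Fu w ≠ 0 → G.dist u w ≤ r := by
    intro w h
    by_contra hc
    apply h
    rw [hFu]
    dsimp only
    rw [if_neg hc]
  have hsupp' : ∀ w, Fv w ≠ 0 → G.dist v w ≤ r := by
    intro w h
    by_contra hc
    apply h
    rw [hFv]
    dsimp only
    rw [if_neg hc]
  have hzero1 : ∀ w, Fu w * Fv w = 0 := by
    intro w
    by_cases h1 : Fu w = 0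
    · rw [h1, zero_mul]
    by_cases h2 : Fv w = 0
    · rw [h2, mul_zero]
    exfalso
    have hu := hsupp w h1
    have hv := hsupp' w h2
    have htri : G.dist u v ≤ G.dist u w + G.dist w v := hconn.dist_triangle
    have hcomm : G.dist w v = G.dist v w := SimpleGraph.dist_comm
    omega
  have hzero2 : ∀ w b, G.Adj w b → Fu w * Fv b = 0 := by
    intro w b hwb
    by_cases h1 : Fu w = 0
    · rw [h1, zero_mul]
    by_cases h2 : Fv b = 0
    · rw [h2, mul_zero]
    exfalso
    have hu := hsupp w h1
    have hv := hsupp' b h2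
    have htri : G.dist u v ≤ G.dist u w + G.dist w v := hconn.dist_triangle
    have htri2 : G.dist w v ≤ G.dist w b + G.dist b v := hconn.dist_triangle
    have hwb1 : G.dist w b ≤ 1 := by
      have := adj_dist_le' hconn (u := w) hwb
      rw [SimpleGraph.dist_self] at this
      omega
    have hcomm : G.dist b v = G.dist v b := SimpleGraph.dist_comm
    omega
  -- vectors
  set yu : Fin N → ℝ := fun w => Real.sqrt (1 + G.degree w) * Fu w with hyu
  set yv : Fin N → ℝ := fun w => Real.sqrt (1 + G.degree w) * Fv w with hyv
  have hyu0 : yu ≠ 0 := by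
    intro h
    have := congrFun h u
    rw [hyu] at this
    dsimp only at this
    rw [hFuu, mul_one] at this
    exact (Real.sqrt_pos.mpr (by positivity : (0:ℝ) < 1 + G.degree u)).ne' this
  have hyv0 : yv ≠ 0 := by
    intro h
    have := congrFun h v
    rw [hyv] at this
    dsimp only at this
    rw [hFvv, mul_one] at this
    exact (Real.sqrt_pos.mpr (by positivity : (0:ℝ) < 1 + G.degree v)).ne' this
  -- orthogonality
  have hdot0 : yu ⬝ᵥ yv = 0 := by
    rw [hyu, hyv, dot_translate0 G Fu Fv]
    apply Finset.sum_eq_zero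
    intro w _
    rw [hzero1 w, mul_zero]
  have hSdot0 : yu ⬝ᵥ (Sadj *ᵥ yv) = 0 := by
    rw [hyu, hyv, quad_translate0 G Sadj hSdef Fu Fv]
    have h1 : ∑ w, Fu w * Fv w = 0 := Finset.sum_eq_zero (fun w _ => hzero1 w)
    have h2 : ∑ w, Fu w * (∑ b ∈ G.neighborFinset w, Fv b) = 0 := by
      apply Finset.sum_eq_zero
      intro w _
      rw [Finset.mul_sum]
      apply Finset.sum_eq_zero
      intro b hb
      exact hzero2 w b ((SimpleGraph.mem_neighborFinset _ _ _).mp hb)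
    rw [h1, h2, add_zero]
  -- quadratic form bounds
  have hquad : ∀ (F₀ : Fin N → ℝ) (c : Fin N),
      F₀ = (fun w => if G.dist c w ≤ r then (q⁻¹) ^ (G.dist c w) else 0) →
      F₀ c = 1 →
      θ * ((fun w => Real.sqrt (1 + G.degree w) * F₀ w) ⬝ᵥ
            (fun w => Real.sqrt (1 + G.degree w) * F₀ w))
        < (fun w => Real.sqrt (1 + G.degree w) * F₀ w) ⬝ᵥ
            (Sadj *ᵥ (fun w => Real.sqrt (1 + G.degree w) * F₀ w)) := by
    intro F₀ c hdef hc1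
    rw [dot_translate0 G F₀ F₀, quad_translate0 G Sadj hSdef F₀ F₀]
    have hnn := hFnn F₀ c hdef
    have hsq : ∀ w, F₀ w * F₀ w = F₀ w ^ 2 := fun w => (sq (F₀ w)).symm
    rcases le_or_gt θ 0 with hneg | hpos
    · have hA : (1:ℝ) ≤ ∑ w, F₀ w * F₀ w := by
        have h' : F₀ c * F₀ c ≤ ∑ w, F₀ w * F₀ w := Finset.single_le_sum
          (f := fun w => F₀ w * F₀ w) (fun w _ => mul_self_nonneg (F₀ w)) (Finset.mem_univ c)
        rw [hc1] at h'
        linarith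
      have hB : 0 ≤ ∑ w, F₀ w * (∑ b ∈ G.neighborFinset w, F₀ b) := by
        apply Finset.sum_nonneg
        intro w _
        exact mul_nonneg (hnn w) (Finset.sum_nonneg fun b _ => hnn b)
      have hD : 0 ≤ ∑ w, (1 + (G.degree w : ℝ)) * (F₀ w * F₀ w) := by
        apply Finset.sum_nonneg
        intro w _
        have : (0:ℝ) ≤ 1 + (G.degree w : ℝ) := by positivity
        exact mul_nonneg this (mul_self_nonneg _)
      calc θ * ∑ w, (1 + (G.degree w : ℝ)) * (F₀ w * F₀ w) ≤ 0 :=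
            mul_nonpos_of_nonpos_of_nonneg hneg hD
        _ < (∑ w, F₀ w * F₀ w) + ∑ w, F₀ w * (∑ b ∈ G.neighborFinset w, F₀ b) := by linarith
    · have hcore := core0 hconn c r t hd2 hr1 ht4 ht5 hrt θ hpos.le
        (by rw [hθform, ← hqdef] : θ = 2*Real.sqrt ((G.maxDegree:ℝ)-1)/((Real.sqrt ((G.maxDegree:ℝ)-1))^2+1)
          - (2/(t:ℝ))*(1 + 2*Real.sqrt ((G.maxDegree:ℝ)-1)/((Real.sqrt ((G.maxDegree:ℝ)-1))^2+1)))
        F₀ (by rw [hdef, ← hqdef])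
      have e1 : ∑ w, (1 + (G.degree w : ℝ)) * (F₀ w * F₀ w)
          = ∑ w, (1 + (G.degree w : ℝ)) * F₀ w ^ 2 :=
        Finset.sum_congr rfl (fun w _ => by rw [hsq w])
      have e2 : ∑ w, F₀ w * F₀ w = ∑ w, F₀ w ^ 2 :=
        Finset.sum_congr rfl (fun w _ => by rw [hsq w])
      rw [e1, e2]
      exact hcore
  have ha := hquad Fu u hFu hFuu
  have hb := hquad Fv v hFv hFvv
  exact second_eig_lt hN Sadj hS μ hμmono σ hμ θ yu yv hyu0 hyv0 ha hb hdot0 hSdot0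
end

section
/- Let G be a finite simple connected graph on N ≥ 2 vertices with adjacency matrix A and diagonal degree matrix D, and let S̃_adj = (I + D)^{-1/2}(I + A)(I + D)^{-1/2}. Then every eigenvalue λ of S̃_adj satisfies −1 < λ ≤ 1; moreover 1 is an eigenvalue of S̃_adj, attained by the vector with entries √(1 + deg(v)), and all other eigenvalues have absolute value strictly less than 1 (i.e., the eigenvalue 1 is simple). -/
open Matrix

private lemma walk_eq' {N : ℕ} {G : SimpleGraph (Fin N)} {y : Fin N → ℝ}
    (h : ∀ a b : Fin N, G.Adj a b → y a = y b) {u v : Fin N} (p : G.Walk u v) : y u = y v := by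
  induction p with
  | nil => rfl
  | cons h' _ ih => exact (h _ _ h').trans ih

private lemma smul_formula {N : ℕ} (G : SimpleGraph (Fin N)) [DecidableRel G.Adj]
    (Sadj : Matrix (Fin N) (Fin N) ℝ)
    (hSdef : Sadj = Matrix.diagonal (fun v => (Real.sqrt (1 + G.degree v))⁻¹) *
      ((1 : Matrix (Fin N) (Fin N) ℝ) + G.adjMatrix ℝ) *
      Matrix.diagonal (fun v => (Real.sqrt (1 + G.degree v))⁻¹))
    (x : Fin N → ℝ) (v : Fin N) :
    (Sadj *ᵥ x) v = (Real.sqrt (1 + G.degree v))⁻¹ *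
      ((Real.sqrt (1 + G.degree v))⁻¹ * x v +
        ∑ u ∈ G.neighborFinset v, (Real.sqrt (1 + G.degree u))⁻¹ * x u) := by
  subst hSdef
  rw [← Matrix.mulVec_mulVec, ← Matrix.mulVec_mulVec]
  simp only [Matrix.mulVec_diagonal, Matrix.add_mulVec, Matrix.one_mulVec, Pi.add_apply,
    SimpleGraph.adjMatrix_mulVec_apply]

private lemma key_lemma {N : ℕ} (G : SimpleGraph (Fin N)) [DecidableRel G.Adj]
    (hconn : G.Connected)
    (Sadj : Matrix (Fin N) (Fin N) ℝ)
    (hSdef : Sadj = Matrix.diagonal (fun v => (Real.sqrt (1 + G.degree v))⁻¹) *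
      ((1 : Matrix (Fin N) (Fin N) ℝ) + G.adjMatrix ℝ) *
      Matrix.diagonal (fun v => (Real.sqrt (1 + G.degree v))⁻¹))
    {x : Fin N → ℝ} (hx : x ≠ 0) {lam : ℝ} (hlx : Sadj *ᵥ x = lam • x) :
    (-1 < lam ∧ lam ≤ 1) ∧
      (lam = 1 → ∃ c : ℝ, x = c • fun v => Real.sqrt (1 + G.degree v)) := by
  set w : Fin N → ℝ := fun v => Real.sqrt (1 + G.degree v) with hwdef
  have hd : ∀ v, (0:ℝ) < 1 + G.degree v := fun v => by positivity
  have hw : ∀ v, 0 < w v := fun v => Real.sqrt_pos.2 (hd v)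
  have hww : ∀ v, w v * w v = 1 + G.degree v := fun v => Real.mul_self_sqrt (hd v).le
  set y : Fin N → ℝ := fun v => (w v)⁻¹ * x v with hydef
  have hy : ∀ v, (w v)⁻¹ * x v = y v := fun _ => rfl
  have hxy : ∀ v, x v = w v * y v := by
    intro v; rw [← hy v, ← mul_assoc, mul_inv_cancel₀ (hw v).ne', one_mul]
  -- pointwise eigen-equation
  have hv : ∀ v, y v ^ 2 + ∑ u ∈ G.neighborFinset v, y v * y u
      = lam * ((1 + (G.degree v : ℝ)) * y v ^ 2) := by
    intro v
    have h0 := congrFun hlx v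
    rw [smul_formula G Sadj hSdef] at h0
    simp only [Pi.smul_apply, smul_eq_mul] at h0
    simp only [show ∀ u, Real.sqrt (1 + G.degree u) = w u from fun _ => rfl, hy] at h0
    have h1 : y v + ∑ u ∈ G.neighborFinset v, y u = w v * (lam * x v) := by
      rw [← h0, ← mul_assoc, mul_inv_cancel₀ (hw v).ne', one_mul]
    calc y v ^ 2 + ∑ u ∈ G.neighborFinset v, y v * y u
        = y v * (y v + ∑ u ∈ G.neighborFinset v, y u) := by rw [mul_add, Finset.mul_sum, sq]
      _ = y v * (w v * (lam * (w v * y v))) := by rw [h1, hxy v]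
      _ = lam * ((w v * w v) * y v ^ 2) := by ring
      _ = lam * ((1 + (G.degree v : ℝ)) * y v ^ 2) := by rw [hww v]
  set S1 : ℝ := ∑ v, y v ^ 2 with hS1
  set Sd : ℝ := ∑ v, (G.degree v : ℝ) * y v ^ 2 with hSd
  set S2 : ℝ := ∑ v, ∑ u ∈ G.neighborFinset v, y v * y u with hS2
  -- summed eigen-equation
  have hQ : S1 + S2 = lam * (S1 + Sd) := by
    have h1 : S1 + S2 = ∑ v, (y v ^ 2 + ∑ u ∈ G.neighborFinset v, y v * y u) := by
      rw [hS1, hS2, Finset.sum_add_distrib]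
    have h2 : S1 + Sd = ∑ v, (1 + (G.degree v : ℝ)) * y v ^ 2 := by
      rw [hS1, hSd, ← Finset.sum_add_distrib]
      exact Finset.sum_congr rfl fun v _ => by ring
    rw [h1, h2, Finset.mul_sum]
    exact Finset.sum_congr rfl fun v _ => hv v
  -- symmetry of neighbor sums
  have hsym : ∀ f : Fin N → ℝ,
      (∑ v, ∑ u ∈ G.neighborFinset v, f u) = ∑ u, (G.degree u : ℝ) * f u := by
    intro f
    have h1 : ∀ v : Fin N, ∑ u ∈ G.neighborFinset v, f u
        = ∑ u, if G.Adj v u then f u else 0 := fun v => by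
      rw [SimpleGraph.neighborFinset_eq_filter, Finset.sum_filter]
    simp_rw [h1]
    rw [Finset.sum_comm]
    refine Finset.sum_congr rfl fun u _ => ?_
    have h2 : ∀ v : Fin N, (if G.Adj v u then f u else 0)
        = if v ∈ G.neighborFinset u then f u else 0 := fun v => by
      simp [SimpleGraph.mem_neighborFinset, G.adj_comm]
    simp_rw [h2]
    rw [Finset.sum_ite_mem, Finset.univ_inter, Finset.sum_const, nsmul_eq_mul,
      SimpleGraph.card_neighborFinset_eq_degree]
  -- expansion of the sums of squares over edges
  have hmid : ∑ v, y v * ∑ u ∈ G.neighborFinset v, y u = S2 := by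
    rw [hS2]
    exact Finset.sum_congr rfl fun v _ => Finset.mul_sum _ _ _
  have expand : ∀ s : ℝ, ∑ v, ∑ u ∈ G.neighborFinset v, (y v + s * y u) ^ 2
      = Sd + 2 * s * S2 + s ^ 2 * Sd := by
    intro s
    have h1 : ∀ v : Fin N, ∑ u ∈ G.neighborFinset v, (y v + s * y u) ^ 2
        = (G.degree v : ℝ) * y v ^ 2 + 2 * s * (y v * ∑ u ∈ G.neighborFinset v, y u)
          + s ^ 2 * ∑ u ∈ G.neighborFinset v, y u ^ 2 := by
      intro v
      have h2 : ∀ u : Fin N, (y v + s * y u) ^ 2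
          = y v ^ 2 + 2 * s * (y v * y u) + s ^ 2 * y u ^ 2 := fun u => by ring
      simp_rw [h2]
      simp only [Finset.sum_add_distrib, ← Finset.mul_sum, Finset.sum_const, nsmul_eq_mul,
        SimpleGraph.card_neighborFinset_eq_degree]
    simp_rw [h1]
    rw [Finset.sum_add_distrib, Finset.sum_add_distrib, ← Finset.mul_sum, ← Finset.mul_sum,
      hmid, hsym fun u => y u ^ 2, ← hSd]
  have hEsub := expand (-1)
  have hEadd := expand 1
  have hsubnn : (0:ℝ) ≤ ∑ v, ∑ u ∈ G.neighborFinset v, (y v + (-1) * y u) ^ 2 :=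
    Finset.sum_nonneg fun v _ => Finset.sum_nonneg fun u _ => sq_nonneg _
  have haddnn : (0:ℝ) ≤ ∑ v, ∑ u ∈ G.neighborFinset v, (y v + 1 * y u) ^ 2 :=
    Finset.sum_nonneg fun v _ => Finset.sum_nonneg fun u _ => sq_nonneg _
  have hS2le : S2 ≤ Sd := by nlinarith [hEsub, hsubnn]
  have hS2ge : -Sd ≤ S2 := by nlinarith [hEadd, haddnn]
  -- positivity
  have hS1pos : 0 < S1 := by
    obtain ⟨v0, hv0⟩ := Function.ne_iff.1 hx
    refine Finset.sum_pos' (fun v _ => sq_nonneg _) ⟨v0, Finset.mem_univ _, ?_⟩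
    have : y v0 ≠ 0 := by
      rw [← hy v0]
      exact mul_ne_zero (inv_ne_zero (hw v0).ne') hv0
    positivity
  have hSdnn : 0 ≤ Sd := Finset.sum_nonneg fun v _ => by positivity
  have hPpos : 0 < S1 + Sd := by linarith
  constructor
  · constructor
    · nlinarith
    · nlinarith
  · intro hlam1
    subst hlam1
    -- equality case: S2 = Sd, hence edge differences vanish
    have hS2eq : S2 = Sd := by linarith
    have hzero : ∑ v, ∑ u ∈ G.neighborFinset v, (y v + (-1) * y u) ^ 2 = 0 := by
      rw [hEsub]; ring_nf; nlinarith [hS2eq]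
    have hadj : ∀ a b : Fin N, G.Adj a b → y a = y b := by
      intro a b hab
      have h1 := (Finset.sum_eq_zero_iff_of_nonneg
        (fun v _ => Finset.sum_nonneg fun u _ => sq_nonneg _)).1 hzero a (Finset.mem_univ _)
      have h2 := (Finset.sum_eq_zero_iff_of_nonneg (fun u _ => sq_nonneg _)).1 h1 b
        ((SimpleGraph.mem_neighborFinset G a b).2 hab)
      have := sq_eq_zero_iff.1 h2
      linarith
    obtain ⟨v0⟩ := hconn.nonempty
    refine ⟨y v0, funext fun v => ?_⟩
    have hyv : y v = y v0 := (walk_eq' hadj ((hconn v0 v).some)).symm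
    simp only [Pi.smul_apply, smul_eq_mul]
    rw [hxy v, hyv, mul_comm]

private lemma eigvec_one {N : ℕ} (G : SimpleGraph (Fin N)) [DecidableRel G.Adj]
    (Sadj : Matrix (Fin N) (Fin N) ℝ)
    (hSdef : Sadj = Matrix.diagonal (fun v => (Real.sqrt (1 + G.degree v))⁻¹) *
      ((1 : Matrix (Fin N) (Fin N) ℝ) + G.adjMatrix ℝ) *
      Matrix.diagonal (fun v => (Real.sqrt (1 + G.degree v))⁻¹)) :
    Sadj *ᵥ (fun v => Real.sqrt (1 + G.degree v)) =
      (fun v => Real.sqrt (1 + G.degree v)) := by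
  funext v
  have hd : ∀ u : Fin N, (0:ℝ) < 1 + G.degree u := fun u => by positivity
  have hw : ∀ u : Fin N, 0 < Real.sqrt (1 + G.degree u) := fun u => Real.sqrt_pos.2 (hd u)
  rw [smul_formula G Sadj hSdef]
  have h1 : ∀ u : Fin N, (Real.sqrt (1 + G.degree u))⁻¹ * Real.sqrt (1 + G.degree u) = 1 :=
    fun u => inv_mul_cancel₀ (hw u).ne'
  rw [h1 v]
  have h2 : ∑ u ∈ G.neighborFinset v,
      (Real.sqrt (1 + G.degree u))⁻¹ * Real.sqrt (1 + G.degree u) = (G.degree v : ℝ) := by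
    rw [Finset.sum_congr rfl fun u _ => h1 u, Finset.sum_const, nsmul_eq_mul,
      SimpleGraph.card_neighborFinset_eq_degree, mul_one]
  rw [h2]
  rw [inv_mul_eq_iff_eq_mul₀ (hw v).ne']
  exact (Real.mul_self_sqrt (hd v).le).symm

/-- **Spectral properties of the augmented normalized adjacency operator.**
For a finite simple connected graph `G` on `N ≥ 2` vertices, every eigenvalue `λ` of
`S̃ = (I+D)^{-1/2}(I+A)(I+D)^{-1/2}` satisfies `-1 < λ ≤ 1`; moreover `1` is an eigenvalue,
attained by the vector with entries `√(1 + deg v)`, and it is simple: in a nondecreasing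
listing `μ` of the eigenvalues with multiplicity, `μ_N = 1` and `|μ_i| < 1` for `i < N`. -/
theorem augmented_normalized_adjacency_spectrum
    {N : ℕ} (hN : 2 ≤ N)
    (G : SimpleGraph (Fin N)) [DecidableRel G.Adj]
    (hconn : G.Connected)
    (Sadj : Matrix (Fin N) (Fin N) ℝ)
    (hSdef : Sadj = Matrix.diagonal (fun v => (Real.sqrt (1 + G.degree v))⁻¹) *
      ((1 : Matrix (Fin N) (Fin N) ℝ) + G.adjMatrix ℝ) *
      Matrix.diagonal (fun v => (Real.sqrt (1 + G.degree v))⁻¹))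
    (hS : Sadj.IsHermitian)
    (μ : Fin N → ℝ) (hμmono : Monotone μ)
    (σ : Equiv.Perm (Fin N)) (hμ : μ = hS.eigenvalues ∘ σ) :
    (∀ lam ∈ spectrum ℝ Sadj, -1 < lam ∧ lam ≤ 1) ∧
    (Sadj *ᵥ (fun v => Real.sqrt (1 + G.degree v)) =
      (fun v => Real.sqrt (1 + G.degree v))) ∧
    μ ⟨N - 1, by omega⟩ = 1 ∧
    (∀ i : Fin N, (i : ℕ) < N - 1 → |μ i| < 1) := by
  have hSw := eigvec_one G Sadj hSdef
  have key := fun {x : Fin N → ℝ} (hx : x ≠ 0) {lam : ℝ} (hlx : Sadj *ᵥ x = lam • x) =>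
    key_lemma G hconn Sadj hSdef hx hlx
  set w : Fin N → ℝ := fun v => Real.sqrt (1 + G.degree v) with hwdef
  have hd : ∀ v : Fin N, (0:ℝ) < 1 + G.degree v := fun v => by positivity
  have hw : ∀ v, 0 < w v := fun v => Real.sqrt_pos.2 (hd v)
  have hwne : w ≠ 0 := fun h => absurd (congrFun h ⟨0, by omega⟩) (hw _).ne'
  have hene : ∀ j : Fin N,
      ((WithLp.equiv 2 (Fin N → ℝ)) (hS.eigenvectorBasis j) : Fin N → ℝ) ≠ 0 := by
    intro j h0
    exact hS.eigenvectorBasis.orthonormal.ne_zero j (by simpa using h0)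
  have hebound : ∀ j : Fin N, -1 < hS.eigenvalues j ∧ hS.eigenvalues j ≤ 1 := by
    intro j
    exact (key (hene j) (hS.mulVec_eigenvectorBasis j)).1
  have hspec := hS.spectrum_real_eq_range_eigenvalues
  have part1 : ∀ lam ∈ spectrum ℝ Sadj, -1 < lam ∧ lam ≤ 1 := by
    intro lam hlam
    rw [hspec] at hlam
    obtain ⟨j, rfl⟩ := hlam
    exact hebound j
  have h1spec : (1:ℝ) ∈ spectrum ℝ Sadj := by
    rw [spectrum.mem_iff]
    intro hunit
    rw [Matrix.isUnit_iff_isUnit_det] at hunit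
    have hdet : ((algebraMap ℝ (Matrix (Fin N) (Fin N) ℝ)) 1 - Sadj).det = 0 := by
      rw [← Matrix.exists_mulVec_eq_zero_iff]
      refine ⟨w, hwne, ?_⟩
      rw [Matrix.sub_mulVec, _root_.map_one (algebraMap ℝ (Matrix (Fin N) (Fin N) ℝ)), Matrix.one_mulVec, hSw, sub_self]
    rw [hdet] at hunit
    exact not_isUnit_zero hunit
  obtain ⟨j1, hj1⟩ : ∃ j, hS.eigenvalues j = 1 := by
    rw [hspec] at h1spec; exact h1spec
  have hμi : ∀ i, μ i = hS.eigenvalues (σ i) := fun i => congrFun hμ i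
  have hμle : ∀ i, μ i ≤ 1 := fun i => by rw [hμi]; exact (hebound _).2
  have hμgt : ∀ i, -1 < μ i := fun i => by rw [hμi]; exact (hebound _).1
  have hlast : μ ⟨N - 1, by omega⟩ = 1 := by
    refine le_antisymm (hμle _) ?_
    have h1 : μ (σ.symm j1) = 1 := by
      rw [hμi, Equiv.apply_symm_apply, hj1]
    have h2 : σ.symm j1 ≤ ⟨N - 1, by omega⟩ := by
      rw [Fin.le_def]
      show (σ.symm j1 : ℕ) ≤ N - 1
      have := (σ.symm j1).isLt
      omega
    rw [← h1]
    exact hμmono h2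
  have huniq : ∀ j j' : Fin N, hS.eigenvalues j = 1 → hS.eigenvalues j' = 1 → j = j' := by
    intro j j' h h'
    by_contra hne
    have h1 := hS.mulVec_eigenvectorBasis j
    have h2 := hS.mulVec_eigenvectorBasis j'
    rw [h] at h1; rw [h'] at h2
    obtain ⟨c, hc⟩ := (key (hene j) h1).2 rfl
    obtain ⟨c', hc'⟩ := (key (hene j') h2).2 rfl
    have hcne : c ≠ 0 := by
      intro h0; apply hene j; rw [hc, h0, zero_smul]
    have hcne' : c' ≠ 0 := by
      intro h0; apply hene j'; rw [hc', h0, zero_smul]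
    have hinner : (inner ℝ (hS.eigenvectorBasis j) (hS.eigenvectorBasis j') : ℝ) = 0 :=
      hS.eigenvectorBasis.orthonormal.2 hne
    rw [PiLp.inner_apply] at hinner
    have hsum : ∑ v : Fin N, c * w v * (c' * w v) = 0 := by
      rw [← hinner]
      refine Finset.sum_congr rfl fun v _ => ?_
      have e1 : (hS.eigenvectorBasis j : Fin N → ℝ) v = c * w v := by
        have := congrFun hc v
        simpa using this
      have e2 : (hS.eigenvectorBasis j' : Fin N → ℝ) v = c' * w v := by
        have := congrFun hc' v
        simpa using this
      rw [RCLike.inner_apply, e1, e2]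
      simp; ring
    haveI : Nonempty (Fin N) := ⟨⟨0, by omega⟩⟩
    have hpos : 0 < ∑ v : Fin N, w v * w v :=
      Finset.sum_pos (fun v _ => mul_pos (hw v) (hw v)) Finset.univ_nonempty
    have : ∑ v : Fin N, c * w v * (c' * w v) = c * c' * ∑ v : Fin N, w v * w v := by
      rw [Finset.mul_sum]
      exact Finset.sum_congr rfl fun v _ => by ring
    rw [this] at hsum
    exact (mul_ne_zero (mul_ne_zero hcne hcne') hpos.ne') hsum
  refine ⟨part1, hSw, hlast, ?_⟩
  intro i hi
  have hne1 : μ i ≠ 1 := by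
    intro h1
    have : σ i = σ ⟨N - 1, by omega⟩ := by
      apply huniq
      · rw [← hμi, h1]
      · rw [← hμi, hlast]
    have : i = ⟨N - 1, by omega⟩ := σ.injective this
    rw [this] at hi
    simp at hi
  exact abs_lt.2 ⟨hμgt i, lt_of_le_of_ne (hμle i) hne1⟩
end

section
/- Let G be a finite simple graph on vertex set V with n = |V| vertices and degrees d_x ≥ 1 for all x, let γ > 0, and let f : V → ℝ be not identically zero with ∑_{x∈V} f(x) d_x = 0. Define g : V → ℝ by g(x) = f(x) − γ(∑_{y∈V} f(y)) / ∑_{y∈V}(d_y + γ). Then ∑_{x∈V} g(x)(d_x + γ) = 0 and ∑_{x∈V} g(x)²(d_x + γ) > ∑_{x∈V} f(x)² d_x. -/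
/-- **The shifted test function after adding self-loops.**
Let `G` be a finite simple graph with all degrees at least `1`, `γ > 0`, and let
`f : V → ℝ` be not identically zero with `∑ f(x) d_x = 0`. Define
`g(x) = f(x) − γ (∑ f(y)) / ∑ (d_y + γ)`. Then `∑ g(x)(d_x + γ) = 0` and
`∑ g(x)² (d_x + γ) > ∑ f(x)² d_x`. -/
theorem shifted_function_properties {V : Type} [Fintype V] [DecidableEq V]
    (G : SimpleGraph V) [DecidableRel G.Adj]
    (hdeg : ∀ x : V, 1 ≤ G.degree x)
    (γ : ℝ) (hγ : 0 < γ)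
    (f : V → ℝ) (hf : f ≠ 0)
    (hsum : ∑ x : V, f x * (G.degree x : ℝ) = 0)
    (g : V → ℝ)
    (hg : ∀ x : V, g x = f x - γ * (∑ y : V, f y) / (∑ y : V, ((G.degree y : ℝ) + γ))) :
    (∑ x : V, g x * ((G.degree x : ℝ) + γ) = 0) ∧
    (∑ x : V, (f x) ^ 2 * (G.degree x : ℝ)) <
      ∑ x : V, (g x) ^ 2 * ((G.degree x : ℝ) + γ) := by
  set D : ℝ := ∑ y : V, ((G.degree y : ℝ) + γ) with hD
  set S : ℝ := ∑ y : V, f y with hS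
  set c : ℝ := γ * S / D with hc
  -- a vertex where f is nonzero
  obtain ⟨x0, hx0⟩ : ∃ x, f x ≠ 0 := by
    by_contra h
    push_neg at h
    exact hf (funext h)
  set n : ℝ := (Fintype.card V : ℝ) with hn
  have hn1 : (1 : ℝ) ≤ n := by
    have h : 1 ≤ Fintype.card V := Fintype.card_pos_iff.mpr ⟨x0⟩
    rw [hn]; exact_mod_cast h
  -- D ≥ n * (1 + γ)
  have hDlb : n * (1 + γ) ≤ D := by
    rw [hD]
    have : n * (1 + γ) = ∑ _y : V, (1 + γ) := by
      rw [Finset.sum_const, nsmul_eq_mul]; rfl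
    rw [this]
    apply Finset.sum_le_sum
    intro i _
    have : (1 : ℝ) ≤ (G.degree i : ℝ) := by exact_mod_cast hdeg i
    linarith
  have hDpos : 0 < D := by nlinarith
  -- ∑ f (d + γ) = γ S
  have hfd : ∑ x : V, f x * ((G.degree x : ℝ) + γ) = γ * S := by
    simp_rw [mul_add]
    rw [Finset.sum_add_distrib, hsum, zero_add, hS, Finset.mul_sum]
    exact Finset.sum_congr rfl fun x _ => mul_comm _ _
  have hgc : ∀ x, g x = f x - c := fun x => hg x
  constructor
  · simp_rw [hgc, sub_mul]
    rw [Finset.sum_sub_distrib, hfd, ← Finset.mul_sum, ← hD, hc]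
    field_simp
    ring
  · -- expansion
    have expand : ∑ x : V, (g x) ^ 2 * ((G.degree x : ℝ) + γ) =
        ∑ x : V, (f x) ^ 2 * ((G.degree x : ℝ) + γ) - 2 * c * (γ * S) + c ^ 2 * D := by
      simp_rw [hgc, sub_sq]
      rw [← hfd, hD, Finset.mul_sum, Finset.mul_sum]
      rw [← Finset.sum_sub_distrib, ← Finset.sum_add_distrib]
      exact Finset.sum_congr rfl fun x _ => by ring
    have split : ∑ x : V, (f x) ^ 2 * ((G.degree x : ℝ) + γ) =
        (∑ x : V, (f x) ^ 2 * (G.degree x : ℝ)) + γ * ∑ x : V, (f x) ^ 2 := by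
      simp_rw [mul_add]
      rw [Finset.sum_add_distrib, Finset.mul_sum]
      congr 1
      exact Finset.sum_congr rfl fun x _ => mul_comm _ _
    set Q : ℝ := ∑ x : V, (f x) ^ 2 with hQ
    have hQpos : 0 < Q := by
      rw [hQ]
      apply Finset.sum_pos' (fun i _ => sq_nonneg _)
      exact ⟨x0, Finset.mem_univ _, by positivity⟩
    have hCS : S ^ 2 ≤ n * Q := by
      have := sq_sum_le_card_mul_sum_sq (s := (Finset.univ : Finset V)) (f := f)
      simpa [hS, hQ, hn] using this
    -- key: γ * S^2 < D * Q
    have hkey : γ * S ^ 2 < D * Q := by nlinarith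
    rw [expand, split, hc]
    have h2 : (γ * S / D) ^ 2 * D = γ ^ 2 * S ^ 2 / D := by
      field_simp
    have h3 : 2 * (γ * S / D) * (γ * S) = 2 * (γ ^ 2 * S ^ 2 / D) := by
      field_simp
    rw [h2, h3]
    have : γ ^ 2 * S ^ 2 / D < γ * Q := by
      rw [div_lt_iff₀ hDpos]
      nlinarith
    linarith
end
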